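/- arXiv:1512.07655 — 5 statements merged into one kernel-verified Lean document; each statement's English description precedes it below -/
import Mathlib

section
/- Let c > 0, ε > 0 and 0 < δ ≤ εc/5 be constants and let n be sufficiently large. Let G and F be edge-disjoint graphs on the vertex set [n] such that G is d-regular with d ≥ εcn, and such that for any two sets A, B ⊆ [n] with |A| ≥ δ²n and |B| ≥ (1/2 - δ)n there is at least one edge of F between A and B. Let H be a 2-factor in G ∪ F with more than one cycle. Then there exist an edge e ∈ (G ∪ F) \ H and edges e₁', e₂' ∈ H such that H ∪ {e} \ {e₁', e₂'} is a partial HC with one fewer connected component (and one fewer edge) than H. -/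
open SimpleGraph

/-- The degree of a vertex, defined via `Set.ncard` (no decidability assumptions). -/
noncomputable def degN {V : Type*} (G : SimpleGraph V) (v : V) : ℕ :=
  (G.neighborSet v).ncard

/-- `G` is `d`-regular. -/
def IsRegN {V : Type*} (G : SimpleGraph V) (d : ℕ) : Prop :=
  ∀ v, degN G v = d

/-- `H` (a spanning subgraph, viewed as a graph on the full vertex set) is a
Hamilton cycle: it is connected and 2-regular. -/
def IsHamCycleGraph {V : Type*} (H : SimpleGraph V) : Prop :=
  H.Connected ∧ IsRegN H 2

/-- `D` is a Hamiltonian decomposition of `Γ`: a family of pairwise edge-disjoint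
Hamilton cycles whose union is `Γ`. -/
def IsHamDecomp {V : Type*} (Γ : SimpleGraph V) (D : Finset (SimpleGraph V)) : Prop :=
  (∀ H ∈ D, IsHamCycleGraph H) ∧
  (D : Set (SimpleGraph V)).Pairwise Disjoint ∧
  D.sup id = Γ

/-- The number of Hamiltonian decompositions of `Γ`. -/
noncomputable def numHamDecomp {V : Type*} (Γ : SimpleGraph V) : ℕ :=
  {D : Finset (SimpleGraph V) | IsHamDecomp Γ D}.ncard

/-- The number of edges of `G` with one endpoint in `A` and the other endpoint in `B`
(edges with both endpoints in `A ∩ B` are counted once). -/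
noncomputable def eBetween {V : Type*} (G : SimpleGraph V) (A B : Set V) : ℕ :=
  {e ∈ G.edgeSet | ∃ a ∈ A, ∃ b ∈ B, e = s(a, b)}.ncard

/-- The graph obtained from `H` by adding the edges in `add` and then deleting
the edges in `del`. -/
def modifyGraph {V : Type*} (H : SimpleGraph V) (add del : Set (Sym2 V)) : SimpleGraph V :=
  SimpleGraph.fromEdgeSet ((H.edgeSet ∪ add) \ del)

/-- The connected component `c` of `H` is a cycle (all its vertices have degree 2). -/
def IsCycleComp {V : Type*} (H : SimpleGraph V) (c : H.ConnectedComponent) : Prop :=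
  ∀ v ∈ c.supp, degN H v = 2

/-- The connected component `c` of `H` is a single (isolated) edge. -/
def IsEdgeComp {V : Type*} (H : SimpleGraph V) (c : H.ConnectedComponent) : Prop :=
  c.supp.ncard = 2

/-- The connected component `c` of `H` is a path (in a graph of maximum degree `≤ 2`:
it contains a vertex of degree at most 1). -/
def IsPathComp {V : Type*} (H : SimpleGraph V) (c : H.ConnectedComponent) : Prop :=
  ∃ v ∈ c.supp, degN H v ≤ 1

/-- `H` is a partial Hamilton cycle (partial HC): one of its connected components is
a path and all of its other components are cycles or isolated edges. -/
def IsPartialHC {V : Type*} (H : SimpleGraph V) : Prop :=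
  (∀ v, degN H v ≤ 2) ∧
  ∃ c : H.ConnectedComponent, IsPathComp H c ∧
    ∀ c' : H.ConnectedComponent, c' ≠ c → IsCycleComp H c' ∨ IsEdgeComp H c'

/-- `H` is a `(≤2)`-factor: every connected component is a cycle or an isolated edge. -/
def IsLe2Factor {V : Type*} (H : SimpleGraph V) : Prop :=
  ∀ c : H.ConnectedComponent, IsCycleComp H c ∨ IsEdgeComp H c

/-- The number of connected components of `H`. -/
noncomputable def numComp {V : Type*} (H : SimpleGraph V) : ℕ :=
  Nat.card H.ConnectedComponent

private lemma degN_eq_degree {V : Type*} [Fintype V] (G : SimpleGraph V) [DecidableRel G.Adj]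
    (v : V) : degN G v = G.degree v := by
  rw [degN, ← card_neighborFinset_eq_degree, neighborFinset_def, Set.ncard_eq_toFinset_card']

private lemma reach_del_two {n : ℕ} {H : SimpleGraph (Fin n)} (h2 : IsRegN H 2)
    {a x b y : Fin n} (hax : H.Adj a x) (hby : H.Adj b y) (hab : ¬ H.Reachable a b) :
    (H.deleteEdges {s(a, x), s(b, y)}).Reachable a x := by
  classical
  by_contra hcon
  set H₂ := H.deleteEdges {s(a, x), s(b, y)} with hH₂def
  have hH₂le : H₂ ≤ H := deleteEdges_le _
  have hane : a ≠ b := fun h => hab (h ▸ Reachable.refl a)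
  have haney : a ≠ y := by rintro rfl; exact hab hby.symm.reachable
  have hH₂adj : ∀ u v : Fin n, H₂.Adj u v ↔
      H.Adj u v ∧ s(u, v) ≠ s(a, x) ∧ s(u, v) ≠ s(b, y) := by
    intro u v
    rw [hH₂def, deleteEdges_adj]
    simp [not_or]
  set S : Set (Fin n) := {v | H₂.Reachable a v} with hSdef
  have haS : a ∈ S := Reachable.refl a
  have hxS : x ∉ S := hcon
  have hbS : b ∉ S := fun h => hab (h.mono hH₂le)
  have hyS : y ∉ S := fun h => hab (((h : H₂.Reachable a y).mono hH₂le).trans hby.symm.reachable)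
  have hSclosed : ∀ {u v : Fin n}, u ∈ S → H₂.Adj u v → v ∈ S :=
    fun hu h => Reachable.trans hu h.reachable
  let K : SimpleGraph (Fin n) :=
    { Adj := fun u v => H₂.Adj u v ∧ u ∈ S ∧ v ∈ S
      symm := ⟨fun u v h => ⟨h.1.symm, h.2.2, h.2.1⟩⟩
      loopless := ⟨fun v h => H₂.loopless.irrefl v h.1⟩ }
  haveI : DecidableRel K.Adj := fun _ _ => Classical.dec _
  have hKdeg : ∀ v, Odd (K.degree v) ↔ v = a := by
    intro v
    rw [← degN_eq_degree]
    by_cases hvS : v ∈ S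
    · have hNK : K.neighborSet v = H₂.neighborSet v := by
        ext w
        exact ⟨fun h => h.1, fun h => ⟨h, hvS, hSclosed hvS h⟩⟩
      by_cases hva : v = a
      · subst hva
        have hN2 : H₂.neighborSet v = H.neighborSet v \ {x} := by
          ext w
          simp only [mem_neighborSet, Set.mem_diff, Set.mem_singleton_iff, hH₂adj]
          constructor
          · rintro ⟨h, h1, _⟩
            exact ⟨h, fun hw => h1 (by rw [hw])⟩
          · rintro ⟨h, hw⟩
            refine ⟨h, fun hc => hw (Sym2.congr_right.mp hc), fun hc => ?_⟩
            rcases Sym2.eq_iff.mp hc with ⟨h1, _⟩ | ⟨h1, _⟩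
            exacts [hane h1, haney h1]
        have hx' : x ∈ H.neighborSet v := hax
        have : degN K v = 1 := by
          rw [degN, hNK, hN2, Set.ncard_diff_singleton_of_mem hx',
            show (H.neighborSet v).ncard = 2 from h2 v]
        rw [this]
        simp
      · have hvx : v ≠ x := fun h => hxS (h ▸ hvS)
        have hvb : v ≠ b := fun h => hbS (h ▸ hvS)
        have hvy : v ≠ y := fun h => hyS (h ▸ hvS)
        have hN2 : H₂.neighborSet v = H.neighborSet v := by
          ext w
          simp only [mem_neighborSet, hH₂adj]
          refine ⟨fun h => h.1, fun h => ⟨h, fun hc => ?_, fun hc => ?_⟩⟩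
          · rcases Sym2.eq_iff.mp hc with ⟨h1, _⟩ | ⟨h1, _⟩
            exacts [hva h1, hvx h1]
          · rcases Sym2.eq_iff.mp hc with ⟨h1, _⟩ | ⟨h1, _⟩
            exacts [hvb h1, hvy h1]
        have : degN K v = 2 := by
          rw [degN, hNK, hN2]; exact h2 v
        rw [this]
        simp [hva]
    · have hN0 : K.neighborSet v = ∅ := by
        ext w
        simp only [mem_neighborSet, Set.mem_empty_iff_false, iff_false]
        exact fun h => hvS h.2.1
      have : degN K v = 0 := by rw [degN, hN0]; simp
      rw [this]
      simp
      exact fun h => hvS (h ▸ haS)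
  have heven := K.even_card_odd_degree_vertices
  have hfil : ({v | Odd (K.degree v)} : Finset (Fin n)) = {a} := by
    ext v
    simp [hKdeg]
  rw [hfil] at heven
  simp at heven

private lemma mod_adj {n : ℕ} {H : SimpleGraph (Fin n)} {a b x y : Fin n} (hane : a ≠ b) :
    ∀ u v : Fin n, (modifyGraph H {s(a, b)} {s(a, x), s(b, y)}).Adj u v ↔
      ((H.Adj u v ∨ s(u, v) = s(a, b)) ∧ s(u, v) ≠ s(a, x) ∧ s(u, v) ≠ s(b, y)) := by
  intro u v
  rw [modifyGraph, fromEdgeSet_adj]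
  simp only [Set.mem_diff, Set.mem_union, Set.mem_singleton_iff, Set.mem_insert_iff,
    mem_edgeSet, not_or]
  constructor
  · rintro ⟨⟨h1, h2, h3⟩, _⟩
    exact ⟨h1, h2, h3⟩
  · rintro ⟨h1, h2, h3⟩
    refine ⟨⟨h1, h2, h3⟩, ?_⟩
    rcases h1 with h | h
    · exact h.ne
    · rcases Sym2.eq_iff.mp h with ⟨rfl, rfl⟩ | ⟨rfl, rfl⟩
      exacts [hane, hane.symm]

private lemma nbr_a {n : ℕ} {H : SimpleGraph (Fin n)} {a b x y : Fin n}
    (hax : H.Adj a x) (hby : H.Adj b y) (hab : ¬ H.Reachable a b) :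
    (modifyGraph H {s(a, b)} {s(a, x), s(b, y)}).neighborSet a
      = insert b (H.neighborSet a \ {x}) := by
  have hane : a ≠ b := fun h => hab (h ▸ Reachable.refl a)
  have haney : a ≠ y := by rintro rfl; exact hab hby.symm.reachable
  have hbnex : b ≠ x := by rintro rfl; exact hab hax.reachable
  ext w
  simp only [mem_neighborSet, mod_adj hane, Set.mem_insert_iff, Set.mem_diff,
    Set.mem_singleton_iff]
  constructor
  · rintro ⟨h1 | h1, h2, _⟩
    · right
      exact ⟨h1, fun hw => h2 (by rw [hw])⟩
    · left
      rcases Sym2.eq_iff.mp h1 with ⟨_, rfl⟩ | ⟨h1, _⟩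
      · rfl
      · exact absurd h1 hane
  · rintro (rfl | ⟨h1, h2⟩)
    · refine ⟨Or.inr rfl, fun hc => ?_, fun hc => ?_⟩
      · exact hbnex (Sym2.congr_right.mp hc)
      · rcases Sym2.eq_iff.mp hc with ⟨h1, _⟩ | ⟨h1, _⟩
        exacts [hane h1, haney h1]
    · refine ⟨Or.inl h1, fun hc => ?_, fun hc => ?_⟩
      · exact h2 (Sym2.congr_right.mp hc)
      · rcases Sym2.eq_iff.mp hc with ⟨h3, _⟩ | ⟨h3, _⟩
        exacts [hane h3, haney h3]

private lemma nbr_x {n : ℕ} {H : SimpleGraph (Fin n)} {a b x y : Fin n}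
    (hax : H.Adj a x) (hby : H.Adj b y) (hab : ¬ H.Reachable a b) :
    (modifyGraph H {s(a, b)} {s(a, x), s(b, y)}).neighborSet x
      = H.neighborSet x \ {a} := by
  have hane : a ≠ b := fun h => hab (h ▸ Reachable.refl a)
  have hxnea : x ≠ a := hax.ne'
  have hxneb : x ≠ b := by rintro rfl; exact hab hax.reachable
  have hxney : x ≠ y := by rintro rfl; exact hab (hax.reachable.trans hby.symm.reachable)
  ext w
  simp only [mem_neighborSet, mod_adj hane, Set.mem_diff, Set.mem_singleton_iff]
  constructor
  · rintro ⟨h1 | h1, h2, _⟩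
    · refine ⟨h1, fun hw => h2 ?_⟩
      subst hw
      exact Sym2.eq_swap
    · exfalso
      rcases Sym2.eq_iff.mp h1 with ⟨h3, _⟩ | ⟨h3, _⟩
      exacts [hxnea h3, hxneb h3]
  · rintro ⟨h1, h2⟩
    refine ⟨Or.inl h1, fun hc => ?_, fun hc => ?_⟩
    · rcases Sym2.eq_iff.mp hc with ⟨h3, _⟩ | ⟨_, h4⟩
      exacts [hxnea h3, h2 h4]
    · rcases Sym2.eq_iff.mp hc with ⟨h3, _⟩ | ⟨h3, _⟩
      exacts [hxneb h3, hxney h3]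

private lemma nbr_other {n : ℕ} {H : SimpleGraph (Fin n)} {a b x y : Fin n} (hane : a ≠ b)
    {v : Fin n} (hva : v ≠ a) (hvb : v ≠ b) (hvx : v ≠ x) (hvy : v ≠ y) :
    (modifyGraph H {s(a, b)} {s(a, x), s(b, y)}).neighborSet v = H.neighborSet v := by
  ext w
  simp only [mem_neighborSet, mod_adj hane]
  constructor
  · rintro ⟨h1 | h1, _, _⟩
    · exact h1
    · exfalso
      rcases Sym2.eq_iff.mp h1 with ⟨h3, _⟩ | ⟨h3, _⟩
      exacts [hva h3, hvb h3]
  · intro h1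
    refine ⟨Or.inl h1, fun hc => ?_, fun hc => ?_⟩
    · rcases Sym2.eq_iff.mp hc with ⟨h3, _⟩ | ⟨h3, _⟩
      exacts [hva h3, hvx h3]
    · rcases Sym2.eq_iff.mp hc with ⟨h3, _⟩ | ⟨h3, _⟩
      exacts [hvb h3, hvy h3]

private lemma mod_symm {n : ℕ} (H : SimpleGraph (Fin n)) (a b x y : Fin n) :
    modifyGraph H {s(b, a)} {s(b, y), s(a, x)} = modifyGraph H {s(a, b)} {s(a, x), s(b, y)} := by
  rw [show s(b, a) = s(a, b) from Sym2.eq_swap, Set.pair_comm]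

private lemma surgery {n : ℕ} {H : SimpleGraph (Fin n)} (h2 : IsRegN H 2)
    {a b x y : Fin n} (hax : H.Adj a x) (hby : H.Adj b y) (hab : ¬ H.Reachable a b) :
    IsPartialHC (modifyGraph H {s(a, b)} {s(a, x), s(b, y)}) ∧
      numComp (modifyGraph H {s(a, b)} {s(a, x), s(b, y)}) + 1 = numComp H ∧
      (modifyGraph H {s(a, b)} {s(a, x), s(b, y)}).edgeSet.ncard + 1 = H.edgeSet.ncard := by
  classical
  have hba : ¬ H.Reachable b a := fun h => hab h.symm
  have hane : a ≠ b := fun h => hab (h ▸ Reachable.refl a)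
  have haney : a ≠ y := by rintro rfl; exact hab hby.symm.reachable
  have hbnex : b ≠ x := by rintro rfl; exact hab hax.reachable
  have hxney : x ≠ y := by rintro rfl; exact hab (hax.reachable.trans hby.symm.reachable)
  have hnadj : ¬ H.Adj a b := fun h => hab h.reachable
  set H' := modifyGraph H {s(a, b)} {s(a, x), s(b, y)} with hH'def
  have hdega : degN H' a = 2 := by
    have hbne : b ∉ H.neighborSet a \ {x} := fun h => hnadj h.1
    have hx' : x ∈ H.neighborSet a := hax
    rw [degN, hH'def, nbr_a hax hby hab, Set.ncard_insert_of_notMem hbne,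
      Set.ncard_diff_singleton_of_mem hx', show (H.neighborSet a).ncard = 2 from h2 a]
  have hdegb : degN H' b = 2 := by
    have hnb := nbr_a hby hax hba
    rw [mod_symm] at hnb
    have hane' : a ∉ H.neighborSet b \ {y} := fun h => hnadj h.1.symm
    have hy' : y ∈ H.neighborSet b := hby
    rw [degN, hH'def, hnb, Set.ncard_insert_of_notMem hane',
      Set.ncard_diff_singleton_of_mem hy', show (H.neighborSet b).ncard = 2 from h2 b]
  have hdegx : degN H' x = 1 := by
    have ha' : a ∈ H.neighborSet x := hax.symm
    rw [degN, hH'def, nbr_x hax hby hab, Set.ncard_diff_singleton_of_mem ha',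
      show (H.neighborSet x).ncard = 2 from h2 x]
  have hdegy : degN H' y = 1 := by
    have hnb := nbr_x hby hax hba
    rw [mod_symm] at hnb
    have hb' : b ∈ H.neighborSet y := hby.symm
    rw [degN, hH'def, hnb, Set.ncard_diff_singleton_of_mem hb',
      show (H.neighborSet y).ncard = 2 from h2 y]
  have hdego : ∀ v : Fin n, v ≠ a → v ≠ b → v ≠ x → v ≠ y → degN H' v = 2 := by
    intro v hva hvb hvx hvy
    rw [degN, hH'def, nbr_other hane hva hvb hvx hvy]
    exact h2 v
  have hH₂le : H.deleteEdges {s(a, x), s(b, y)} ≤ H' := by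
    rw [← edgeSet_subset_edgeSet, edgeSet_deleteEdges, hH'def, modifyGraph, edgeSet_fromEdgeSet]
    rintro f ⟨hf, hnf⟩
    exact ⟨⟨Or.inl hf, hnf⟩, H.not_isDiag_of_mem_edgeSet hf⟩
  have hH₂le' : H.deleteEdges {s(b, y), s(a, x)} ≤ H' := by
    rw [Set.pair_comm]; exact hH₂le
  have hrax : H'.Reachable a x := (reach_del_two h2 hax hby hab).mono hH₂le
  have hrby : H'.Reachable b y := (reach_del_two h2 hby hax hba).mono hH₂le'
  have hadjab : H'.Adj a b := by
    rw [hH'def, mod_adj hane]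
    refine ⟨Or.inr rfl, fun hc => ?_, fun hc => ?_⟩
    · exact hbnex (Sym2.congr_right.mp hc)
    · rcases Sym2.eq_iff.mp hc with ⟨h1, _⟩ | ⟨h1, _⟩
      exacts [hane h1, haney h1]
  have hedge : ∀ u v : Fin n, H.Adj u v → H'.Reachable u v := by
    intro u v h
    by_cases h1 : s(u, v) = s(a, x)
    · rcases Sym2.eq_iff.mp h1 with ⟨rfl, rfl⟩ | ⟨rfl, rfl⟩
      exacts [hrax, hrax.symm]
    by_cases h2' : s(u, v) = s(b, y)
    · rcases Sym2.eq_iff.mp h2' with ⟨rfl, rfl⟩ | ⟨rfl, rfl⟩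
      exacts [hrby, hrby.symm]
    exact Adj.reachable (by rw [hH'def, mod_adj hane]; exact ⟨Or.inl h, h1, h2'⟩)
  have hmono : ∀ u v : Fin n, H.Reachable u v → H'.Reachable u v := by
    intro u v h
    obtain ⟨p⟩ := h
    induction p with
    | nil => exact Reachable.refl _
    | cons h p ih => exact (hedge _ _ h).trans ih
  set R : Fin n → Fin n → Prop := fun u v => H.Reachable u v ∨
    (H.Reachable u a ∧ H.Reachable b v) ∨ (H.Reachable u b ∧ H.Reachable a v) with hRdef
  have hRtrans : ∀ u w v : Fin n, R u w → R w v → R u v := by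
    intro u w v h1 h2'
    rcases h1 with h1 | ⟨h1, h1'⟩ | ⟨h1, h1'⟩ <;>
      rcases h2' with h2' | ⟨h2', h2''⟩ | ⟨h2', h2''⟩
    · exact Or.inl (h1.trans h2')
    · exact Or.inr (Or.inl ⟨h1.trans h2', h2''⟩)
    · exact Or.inr (Or.inr ⟨h1.trans h2', h2''⟩)
    · exact Or.inr (Or.inl ⟨h1, h1'.trans h2'⟩)
    · exact absurd (h1'.trans h2').symm hab
    · exact Or.inl (h1.trans h2'')
    · exact Or.inr (Or.inr ⟨h1, h1'.trans h2'⟩)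
    · exact Or.inl (h1.trans h2'')
    · exact absurd (h1'.trans h2') hab
  have hRedge : ∀ u v : Fin n, H'.Adj u v → R u v := by
    intro u v h
    rw [hH'def, mod_adj hane] at h
    rcases h.1 with h1 | h1
    · exact Or.inl h1.reachable
    · rcases Sym2.eq_iff.mp h1 with ⟨rfl, rfl⟩ | ⟨rfl, rfl⟩
      · exact Or.inr (Or.inl ⟨Reachable.refl _, Reachable.refl _⟩)
      · exact Or.inr (Or.inr ⟨Reachable.refl _, Reachable.refl _⟩)
  have hback : ∀ u v : Fin n, H'.Reachable u v → R u v := by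
    intro u v h
    obtain ⟨p⟩ := h
    induction p with
    | nil => exact Or.inl (Reachable.refl _)
    | cons h p ih => exact hRtrans _ _ _ (hRedge _ _ h) ih
  haveI : Finite H.ConnectedComponent := Quot.finite _
  haveI : Finite H'.ConnectedComponent := Quot.finite _
  set B0 : H.ConnectedComponent := H.connectedComponentMk b with hB0def
  have hA0B0 : H.connectedComponentMk a ≠ B0 := fun h => hab (ConnectedComponent.exact h)
  set f : H.ConnectedComponent → H'.ConnectedComponent :=
    ConnectedComponent.lift (fun v => H'.connectedComponentMk v)
      (fun u v p _ => ConnectedComponent.sound (hmono u v p.reachable)) with hfdef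
  set g0 : Fin n → {c : H.ConnectedComponent // c ≠ B0} := fun v =>
    if h : H.Reachable v b then ⟨H.connectedComponentMk a, hA0B0⟩
    else ⟨H.connectedComponentMk v, fun hc => h (ConnectedComponent.exact hc)⟩ with hg0def
  have hg0wd : ∀ u v : Fin n, R u v → g0 u = g0 v := by
    intro u v h
    rcases h with h | ⟨h1, h2'⟩ | ⟨h1, h2'⟩
    · by_cases hub : H.Reachable u b
      · rw [hg0def]; simp only [dif_pos hub, dif_pos (h.symm.trans hub)]
      · have hvb : ¬ H.Reachable v b := fun hv => hub (h.trans hv)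
        rw [hg0def]; simp only [dif_neg hub, dif_neg hvb]
        exact Subtype.ext (ConnectedComponent.sound h)
    · have hub : ¬ H.Reachable u b := fun hv => hab (h1.symm.trans hv)
      have hvb : H.Reachable v b := h2'.symm
      rw [hg0def]; simp only [dif_neg hub, dif_pos hvb]
      exact Subtype.ext (ConnectedComponent.sound h1)
    · have hub : H.Reachable u b := h1
      have hvb : ¬ H.Reachable v b := fun hv => hab (h2'.trans hv)
      rw [hg0def]; simp only [dif_pos hub, dif_neg hvb]
      exact Subtype.ext (ConnectedComponent.sound h2')
  set g : H'.ConnectedComponent → {c : H.ConnectedComponent // c ≠ B0} :=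
    ConnectedComponent.lift g0 (fun u v p _ => hg0wd u v (hback u v p.reachable)) with hgdef
  have hcardeq : Nat.card {c : H.ConnectedComponent // c ≠ B0}
      = Nat.card H'.ConnectedComponent := by
    refine Nat.card_congr ⟨fun c => f c.1, g, ?_, ?_⟩
    · rintro ⟨cc, hc⟩
      induction cc using SimpleGraph.ConnectedComponent.ind with
      | _ v =>
        have hvb : ¬ H.Reachable v b := fun h => hc (ConnectedComponent.sound h)
        simp only [hfdef, hgdef, ConnectedComponent.lift_mk, hg0def, dif_neg hvb]
    · intro d
      induction d using SimpleGraph.ConnectedComponent.ind with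
      | _ v =>
        by_cases h : H.Reachable v b
        · simp only [hfdef, hgdef, ConnectedComponent.lift_mk, hg0def, dif_pos h]
          exact ConnectedComponent.sound ((hadjab.reachable).trans (hmono v b h).symm)
        · simp only [hfdef, hgdef, ConnectedComponent.lift_mk, hg0def, dif_neg h]
  have hnumcomp : numComp H' + 1 = numComp H := by
    haveI := Fintype.ofFinite H.ConnectedComponent
    rw [numComp, numComp, ← hcardeq, Nat.card_eq_fintype_card, Nat.card_eq_fintype_card]
    have h1 : Fintype.card {c : H.ConnectedComponent // c ≠ B0}
        = Fintype.card H.ConnectedComponent - 1 := by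
      rw [show (Fintype.card {c : H.ConnectedComponent // c ≠ B0})
          = Fintype.card {c : H.ConnectedComponent // ¬ (c = B0)} from rfl,
        Fintype.card_subtype_compl, Fintype.card_subtype_eq]
    have h2' : 0 < Fintype.card H.ConnectedComponent := Fintype.card_pos_iff.mpr ⟨B0⟩
    omega
  have hedgeset : H'.edgeSet = (H.edgeSet ∪ {s(a, b)}) \ {s(a, x), s(b, y)} := by
    rw [hH'def, modifyGraph, edgeSet_fromEdgeSet]
    ext f'
    simp only [Set.mem_diff, Set.mem_union, Set.mem_singleton_iff, Set.mem_setOf_eq,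
      Set.mem_insert_iff]
    constructor
    · rintro ⟨⟨h1, h2'⟩, _⟩; exact ⟨h1, h2'⟩
    · rintro ⟨h1, h2'⟩
      refine ⟨⟨h1, h2'⟩, ?_⟩
      rcases h1 with h | rfl
      · exact H.not_isDiag_of_mem_edgeSet h
      · simp [hane]
  have hcard : H'.edgeSet.ncard + 1 = H.edgeSet.ncard := by
    have heab : s(a, b) ∉ H.edgeSet := fun h => hnadj (H.mem_edgeSet.mp h)
    have hne12 : s(a, x) ≠ s(b, y) := by
      intro hc
      rcases Sym2.eq_iff.mp hc with ⟨h1, _⟩ | ⟨h1, _⟩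
      exacts [hane h1, haney h1]
    have hsub : ({s(a, x), s(b, y)} : Set (Sym2 (Fin n))) ⊆ H.edgeSet ∪ {s(a, b)} := by
      intro f' hf'
      simp only [Set.mem_insert_iff, Set.mem_singleton_iff] at hf'
      rcases hf' with rfl | rfl
      · exact Or.inl (H.mem_edgeSet.mpr hax)
      · exact Or.inl (H.mem_edgeSet.mpr hby)
    have hpos : 1 ≤ H.edgeSet.ncard := by
      have hm : s(a, x) ∈ H.edgeSet := H.mem_edgeSet.mpr hax
      have := (Set.ncard_pos (Set.toFinite _)).mpr ⟨_, hm⟩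
      omega
    rw [hedgeset, Set.ncard_diff hsub, Set.ncard_pair hne12,
      Set.union_singleton, Set.ncard_insert_of_notMem heab]
    omega
  have hpartial : IsPartialHC H' := by
    constructor
    · intro v
      by_cases hva : v = a
      · rw [hva, hdega]
      by_cases hvb : v = b
      · rw [hvb, hdegb]
      by_cases hvx : v = x
      · rw [hvx, hdegx]; omega
      by_cases hvy : v = y
      · rw [hvy, hdegy]; omega
      rw [hdego v hva hvb hvx hvy]
    · refine ⟨H'.connectedComponentMk x, ⟨x, ?_, ?_⟩, ?_⟩
      · exact (ConnectedComponent.mem_supp_iff _ _).mpr rfl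
      · rw [hdegx]
      · intro c' hc'
        left
        intro v hv
        rw [ConnectedComponent.mem_supp_iff] at hv
        have hva : v ≠ a := by
          rintro rfl
          exact hc' (by rw [← hv]; exact ConnectedComponent.sound hrax)
        have hvb : v ≠ b := by
          rintro rfl
          exact hc' (by rw [← hv]; exact ConnectedComponent.sound (hadjab.reachable.symm.trans hrax))
        have hvx : v ≠ x := by
          rintro rfl
          exact hc' hv.symm
        have hvy : v ≠ y := by
          rintro rfl
          exact hc' (by rw [← hv]; exact ConnectedComponent.sound (hrby.symm.trans (hadjab.reachable.symm.trans hrax)))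
        rw [hdego v hva hvb hvx hvy]
  exact ⟨hpartial, hnumcomp, hcard⟩

/-- Claim 2.3 of the paper. Let `G`, `F` be edge-disjoint graphs on
`[n]` with `G` `d`-regular, `d ≥ ε c n`, and `F` having an edge between any two large
sets. If `H` is a 2-factor of `G ∪ F` with more than one cycle, then there are an edge
`e ∈ (G ∪ F) \ H` and edges `e₁', e₂' ∈ H` such that `H ∪ {e} \ {e₁', e₂'}` is a
partial HC with one fewer component and one fewer edge than `H`. -/
theorem concatenate_two_cycles (c ε δ : ℝ) (hc : 0 < c) (hε : 0 < ε)
    (hδ₀ : 0 < δ) (hδ₁ : δ ≤ ε * c / 5) :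
    ∃ n₀ : ℕ, ∀ n : ℕ, n₀ ≤ n →
      ∀ (G F : SimpleGraph (Fin n)) (d : ℕ),
        Disjoint G F → IsRegN G d → ε * (c * (n : ℝ)) ≤ (d : ℝ) →
        (∀ A B : Set (Fin n), δ ^ 2 * (n : ℝ) ≤ (A.ncard : ℝ) →
          (1 / 2 - δ) * (n : ℝ) ≤ (B.ncard : ℝ) → 1 ≤ eBetween F A B) →
        ∀ H : SimpleGraph (Fin n), H ≤ G ⊔ F → IsRegN H 2 → 1 < numComp H →
        ∃ e ∈ (G ⊔ F).edgeSet \ H.edgeSet, ∃ e₁' ∈ H.edgeSet, ∃ e₂' ∈ H.edgeSet,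
          IsPartialHC (modifyGraph H {e} {e₁', e₂'}) ∧
          numComp (modifyGraph H {e} {e₁', e₂'}) + 1 = numComp H ∧
          (modifyGraph H {e} {e₁', e₂'}).edgeSet.ncard + 1 = H.edgeSet.ncard := by

  classical
  refine ⟨1, fun n hn G F d hdisj hreg hd hF H hHle hH2 hcomp => ?_⟩
  haveI : Finite H.ConnectedComponent := Quot.finite _
  have hnontriv : Nontrivial H.ConnectedComponent := by
    rw [numComp] at hcomp
    exact Finite.one_lt_card_iff_nontrivial.mp hcomp
  obtain ⟨c₁, c₂, hcne⟩ := hnontriv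
  have hdisj₁₂ : Disjoint c₁.supp c₂.supp := by
    rw [Set.disjoint_left]
    intro v h1 h2'
    rw [ConnectedComponent.mem_supp_iff] at h1 h2'
    exact hcne (h1.symm.trans h2')
  have hsum : c₁.supp.ncard + c₂.supp.ncard ≤ n := by
    rw [← Set.ncard_union_eq hdisj₁₂ (Set.toFinite _) (Set.toFinite _)]
    have h1 : (c₁.supp ∪ c₂.supp).ncard ≤ (Set.univ : Set (Fin n)).ncard :=
      Set.ncard_le_ncard (Set.subset_univ _) (Set.toFinite _)
    simpa [Set.ncard_univ, Nat.card_eq_fintype_card] using h1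
  have key : ∀ C : H.ConnectedComponent, 2 * C.supp.ncard ≤ n →
      ∃ a b : Fin n, ¬ H.Reachable a b ∧ (G ⊔ F).Adj a b := by
    intro C hC
    by_cases hcase : ∃ u, H.connectedComponentMk u = C ∧
        ∃ w, G.Adj u w ∧ H.connectedComponentMk w ≠ C
    · obtain ⟨u, huC, w, hGuw, hwC⟩ := hcase
      refine ⟨u, w, fun h => hwC ?_, (sup_adj _ _ _ _).mpr (Or.inl hGuw)⟩
      rw [← huC]
      exact ConnectedComponent.sound h.symm
    · push_neg at hcase
      obtain ⟨u₀, hu₀⟩ := C.exists_rep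
      have hu₀' : H.connectedComponentMk u₀ = C := hu₀
      have hu₀C : u₀ ∈ C.supp := (ConnectedComponent.mem_supp_iff _ _).mpr hu₀'
      have hNsub : G.neighborSet u₀ ⊆ C.supp \ {u₀} := by
        intro w hw
        refine ⟨(ConnectedComponent.mem_supp_iff _ _).mpr (hcase u₀ hu₀' w hw), ?_⟩
        simp only [Set.mem_singleton_iff]
        exact (hw : G.Adj u₀ w).ne'
      have hdle : d + 1 ≤ C.supp.ncard := by
        have h1 : (G.neighborSet u₀).ncard ≤ (C.supp \ {u₀}).ncard :=
          Set.ncard_le_ncard hNsub (Set.toFinite _)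
        rw [show (G.neighborSet u₀).ncard = d from hreg u₀,
          Set.ncard_diff_singleton_of_mem hu₀C] at h1
        have h2' : 1 ≤ C.supp.ncard := (Set.ncard_pos (Set.toFinite _)).mpr ⟨_, hu₀C⟩
        omega
      have hn1 : 0 < n := u₀.pos
      have hNn : C.supp.ncard ≤ n := by
        have h1 := Set.ncard_le_ncard (Set.subset_univ C.supp) (Set.toFinite _)
        simpa [Set.ncard_univ, Nat.card_eq_fintype_card] using h1
      have hA : δ ^ 2 * (n : ℝ) ≤ (C.supp.ncard : ℝ) := by
        have h1 : (d : ℝ) + 1 ≤ (C.supp.ncard : ℝ) := by exact_mod_cast hdle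
        have h2' : (C.supp.ncard : ℝ) ≤ (n : ℝ) := by exact_mod_cast hNn
        have h3 : (1 : ℝ) ≤ (n : ℝ) := by exact_mod_cast hn1
        have h4 : ε * c * (n : ℝ) ≤ (n : ℝ) - 1 := by nlinarith [hd]
        have h5 : ε * c ≤ 1 := by nlinarith
        have h6 : δ ≤ 1 / 5 := by linarith
        have h7 : δ ^ 2 ≤ ε * c := by nlinarith [sq_nonneg δ, hδ₀.le]
        nlinarith [hd, mul_le_mul_of_nonneg_right h7 (le_trans zero_le_one h3)]
      have hB : (1 / 2 - δ) * (n : ℝ) ≤ (((C.supp)ᶜ : Set (Fin n)).ncard : ℝ) := by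
        have hcompl : C.supp.ncard + ((C.supp)ᶜ : Set (Fin n)).ncard = n := by
          rw [Set.ncard_add_ncard_compl]
          simp [Nat.card_eq_fintype_card]
        have h1 : (C.supp.ncard : ℝ) + (((C.supp)ᶜ : Set (Fin n)).ncard : ℝ) = (n : ℝ) := by
          exact_mod_cast hcompl
        have h2R : 2 * (C.supp.ncard : ℝ) ≤ (n : ℝ) := by exact_mod_cast hC
        nlinarith [mul_nonneg hδ₀.le (Nat.cast_nonneg (α := ℝ) n)]
      have h1F := hF C.supp ((C.supp)ᶜ) hA hB
      rw [eBetween] at h1F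
      have hne0 : {e ∈ F.edgeSet | ∃ a ∈ C.supp, ∃ b ∈ (C.supp)ᶜ, e = s(a, b)}.Nonempty := by
        by_contra hcon
        rw [Set.not_nonempty_iff_eq_empty] at hcon
        rw [hcon] at h1F
        simp at h1F
      obtain ⟨e0, he0F, a, haC, b, hbC, rfl⟩ := hne0
      refine ⟨a, b, ?_, (sup_adj _ _ _ _).mpr (Or.inr (F.mem_edgeSet.mp he0F))⟩
      intro h
      exact hbC ((ConnectedComponent.mem_supp_iff _ _).mpr
        ((ConnectedComponent.sound h.symm).trans ((ConnectedComponent.mem_supp_iff _ _).mp haC)))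
  have hkey2 : ∃ a b : Fin n, ¬ H.Reachable a b ∧ (G ⊔ F).Adj a b := by
    have hor : 2 * c₁.supp.ncard ≤ n ∨ 2 * c₂.supp.ncard ≤ n := by omega
    rcases hor with h | h
    exacts [key c₁ h, key c₂ h]
  obtain ⟨a, b, hab, hGF⟩ := hkey2
  have hxe : (H.neighborSet a).Nonempty :=
    Set.nonempty_of_ncard_ne_zero (by rw [show (H.neighborSet a).ncard = 2 from hH2 a]; norm_num)
  obtain ⟨x, hx⟩ := hxe
  have hye : (H.neighborSet b).Nonempty :=
    Set.nonempty_of_ncard_ne_zero (by rw [show (H.neighborSet b).ncard = 2 from hH2 b]; norm_num)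
  obtain ⟨y, hy⟩ := hye
  have hx : H.Adj a x := hx
  have hy : H.Adj b y := hy
  have hnadj : ¬ H.Adj a b := fun h => hab h.reachable
  refine ⟨s(a, b), ⟨(G ⊔ F).mem_edgeSet.mpr hGF, fun h => hnadj (H.mem_edgeSet.mp h)⟩,
    s(a, x), H.mem_edgeSet.mpr hx, s(b, y), H.mem_edgeSet.mpr hy, ?_⟩
  exact surgery hH2 hx hy hab
end

section
/- Let c > 0, ε > 0 and 0 < δ ≤ εc/5 be constants and let n be sufficiently large. Let G and F be edge-disjoint graphs on the vertex set [n] such that G is d-regular with d ≥ εcn, and such that for any two sets A, B ⊆ [n] with |A| ≥ δ²n and |B| ≥ (1/2 - δ)n there is at least one edge of F between A and B. Then for any vertices x, y ∈ [n] and any set S ⊆ [n] of size |S| ≤ n^{0.6}, there exist vertices x₁, x₂, y₁, y₂ ∈ [n] \ S such that xx₁, yy₁, x₂y₂ are edges of G and x₁x₂, y₁y₂ are edges of F. -/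
open SimpleGraph

/-- Auxiliary counting lemma: in a `d`-regular graph with `d > 0`, if `|Yᶜ| < |X|`
then there is an edge from `X` to `Y`. -/
lemma exists_adj_between {n : ℕ} (G : SimpleGraph (Fin n)) (d : ℕ) (hd : 0 < d)
    (hreg : IsRegN G d) (X Y : Set (Fin n)) (h : Yᶜ.ncard < X.ncard) :
    ∃ u ∈ X, ∃ v ∈ Y, G.Adj u v := by
  classical
  by_contra hc
  push_neg at hc
  have hdeg : ∀ u : Fin n, (Finset.univ.filter (fun v => G.Adj u v)).card = d := by
    intro u
    have h1 := hreg u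
    rw [degN, Set.ncard_eq_toFinset_card'] at h1
    rw [← h1]
    congr 1
    ext v
    simp
  have key : ∑ u ∈ X.toFinset, (Finset.univ.filter (fun v => G.Adj u v)).card
      ≤ ∑ v ∈ Yᶜ.toFinset, (Finset.univ.filter (fun u => G.Adj v u)).card := by
    calc ∑ u ∈ X.toFinset, (Finset.univ.filter (fun v => G.Adj u v)).card
        = ∑ u ∈ X.toFinset, ∑ v ∈ Finset.univ, (if G.Adj u v then 1 else 0) := by
          refine Finset.sum_congr rfl fun u _ => ?_
          rw [Finset.card_filter]
      _ = ∑ u ∈ X.toFinset, ∑ v ∈ Yᶜ.toFinset, (if G.Adj u v then 1 else 0) := by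
          refine Finset.sum_congr rfl fun u hu => ?_
          refine (Finset.sum_subset (Finset.subset_univ _) fun v _ hv => ?_).symm
          rw [if_neg]
          intro hadj
          have hvY : v ∈ Y := by
            by_contra hvY
            exact hv (by simpa using hvY)
          exact hc u (by simpa using hu) v hvY hadj
      _ ≤ ∑ u ∈ Finset.univ, ∑ v ∈ Yᶜ.toFinset, (if G.Adj u v then 1 else 0) :=
          Finset.sum_le_sum_of_subset (Finset.subset_univ _)
      _ = ∑ v ∈ Yᶜ.toFinset, ∑ u ∈ Finset.univ, (if G.Adj u v then 1 else 0) :=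
          Finset.sum_comm
      _ = ∑ v ∈ Yᶜ.toFinset, (Finset.univ.filter (fun u => G.Adj v u)).card := by
          refine Finset.sum_congr rfl fun v _ => ?_
          rw [Finset.card_filter]
          refine Finset.sum_congr rfl fun u _ => ?_
          simp [SimpleGraph.adj_comm]
  simp only [hdeg, Finset.sum_const, smul_eq_mul] at key
  rw [Set.ncard_eq_toFinset_card' X, Set.ncard_eq_toFinset_card' Yᶜ] at h
  nlinarith [key, h, hd]

/-- Observation 2.5 of the paper. Let `G`, `F` be edge-disjoint
graphs on `[n]` with `G` `d`-regular, `d ≥ ε c n`, and `F` having an edge between any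
two large sets. Then for any vertices `x, y` and any set `S` with `|S| ≤ n^0.6`,
there exist `x₁, x₂, y₁, y₂ ∉ S` with `x x₁, y y₁, x₂ y₂ ∈ E(G)` and
`x₁ x₂, y₁ y₂ ∈ E(F)`. -/
theorem substitution_observation (c ε δ : ℝ) (hc : 0 < c) (hε : 0 < ε)
    (hδ₀ : 0 < δ) (hδ₁ : δ ≤ ε * c / 5) :
    ∃ n₀ : ℕ, ∀ n : ℕ, n₀ ≤ n →
      ∀ (G F : SimpleGraph (Fin n)) (d : ℕ),
        Disjoint G F → IsRegN G d → ε * (c * (n : ℝ)) ≤ (d : ℝ) →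
        (∀ A B : Set (Fin n), δ ^ 2 * (n : ℝ) ≤ (A.ncard : ℝ) →
          (1 / 2 - δ) * (n : ℝ) ≤ (B.ncard : ℝ) → 1 ≤ eBetween F A B) →
        ∀ (x y : Fin n) (S : Set (Fin n)), (S.ncard : ℝ) ≤ (n : ℝ) ^ (0.6 : ℝ) →
        ∃ x₁ x₂ y₁ y₂ : Fin n,
          x₁ ∉ S ∧ x₂ ∉ S ∧ y₁ ∉ S ∧ y₂ ∉ S ∧
          G.Adj x x₁ ∧ G.Adj y y₁ ∧ G.Adj x₂ y₂ ∧ F.Adj x₁ x₂ ∧ F.Adj y₁ y₂ := by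
  classical
  refine ⟨⌈(1/δ) ^ ((5:ℝ)/2)⌉₊ + 1, fun n hn G F d hdisj hreg hd hF x y S hS => ?_⟩
  have hn1 : 1 ≤ n := le_trans (Nat.le_add_left 1 _) hn
  have hnR : (1:ℝ) ≤ (n:ℝ) := by exact_mod_cast hn1
  have hn0 : (0:ℝ) < (n:ℝ) := lt_of_lt_of_le one_pos hnR
  -- basic numeric facts
  have hpow : 1/δ < (n:ℝ) ^ (0.4:ℝ) := by
    have h1 : (1/δ) ^ ((5:ℝ)/2) < (n:ℝ) := by
      have h0 := Nat.le_ceil ((1/δ) ^ ((5:ℝ)/2))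
      have h2 : ((⌈(1/δ) ^ ((5:ℝ)/2)⌉₊ : ℝ) + 1) ≤ (n:ℝ) := by exact_mod_cast hn
      linarith
    have h3 : ((1/δ) ^ ((5:ℝ)/2)) ^ (0.4:ℝ) < (n:ℝ) ^ (0.4:ℝ) :=
      Real.rpow_lt_rpow (Real.rpow_nonneg (by positivity) _) h1 (by norm_num)
    have h4 : ((1/δ) ^ ((5:ℝ)/2)) ^ (0.4:ℝ) = 1/δ := by
      rw [← Real.rpow_mul (by positivity : (0:ℝ) ≤ 1/δ)]
      norm_num
    linarith [h3, h4.symm ▸ h3]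
  have hr : (n:ℝ) ^ (0.6:ℝ) < δ * n := by
    have hsplit : (n:ℝ) = (n:ℝ)^(0.6:ℝ) * (n:ℝ)^(0.4:ℝ) := by
      rw [← Real.rpow_add hn0]; norm_num
    have h06 : (0:ℝ) < (n:ℝ)^(0.6:ℝ) := Real.rpow_pos_of_pos hn0 _
    have hδp : 1 < δ * (n:ℝ)^(0.4:ℝ) := by
      rw [div_lt_iff₀ hδ₀] at hpow
      linarith [hpow]
    have hkey : (1:ℝ) * (n:ℝ)^(0.6:ℝ) < (δ * (n:ℝ)^(0.4:ℝ)) * (n:ℝ)^(0.6:ℝ) :=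
      mul_lt_mul_of_pos_right hδp h06
    have heq : δ * (n:ℝ) = (δ * (n:ℝ)^(0.4:ℝ)) * (n:ℝ)^(0.6:ℝ) := by
      calc δ * (n:ℝ) = δ * ((n:ℝ)^(0.6:ℝ) * (n:ℝ)^(0.4:ℝ)) := by rw [← hsplit]
        _ = (δ * (n:ℝ)^(0.4:ℝ)) * (n:ℝ)^(0.6:ℝ) := by ring
    linarith
  have hSn : (S.ncard : ℝ) < δ * n := lt_of_le_of_lt hS hr
  have hdn : (d:ℝ) ≤ (n:ℝ) := by
    have h3 := hreg x
    rw [degN] at h3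
    have h1 : (G.neighborSet x).ncard ≤ (Set.univ : Set (Fin n)).ncard :=
      Set.ncard_le_ncard (Set.subset_univ _) Set.finite_univ
    have h2 : (Set.univ : Set (Fin n)).ncard = n := by
      rw [Set.ncard_univ]; simp
    have : d ≤ n := by omega
    exact_mod_cast this
  have hεc : ε * c ≤ 1 := by
    have h1 : ε * (c * (n:ℝ)) ≤ (n:ℝ) := le_trans hd hdn
    nlinarith [hn0]
  have hδ5 : δ ≤ 1/5 := by linarith
  have h5δ : 5 * (δ * (n:ℝ)) ≤ (d:ℝ) := by
    nlinarith [hd, mul_nonneg (sub_nonneg.mpr hδ₁) hn0.le]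
  have hd0 : 0 < d := by
    have h1 : (0:ℝ) < ε * (c * (n:ℝ)) := by positivity
    have : (0:ℝ) < (d:ℝ) := lt_of_lt_of_le h1 hd
    exact_mod_cast this
  -- candidate neighbourhoods
  have hA : ∀ z : Fin n, δ^2 * (n:ℝ) ≤ ((G.neighborSet z \ S).ncard : ℝ) := by
    intro z
    have hsub : G.neighborSet z ⊆ (G.neighborSet z \ S) ∪ S := by
      intro v hv
      by_cases hvS : v ∈ S
      · exact Or.inr hvS
      · exact Or.inl ⟨hv, hvS⟩
    have h1 : (G.neighborSet z).ncard ≤ ((G.neighborSet z \ S) ∪ S).ncard :=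
      Set.ncard_le_ncard hsub (Set.toFinite _)
    have h2 : ((G.neighborSet z \ S) ∪ S).ncard ≤ (G.neighborSet z \ S).ncard + S.ncard :=
      Set.ncard_union_le _ _
    have h3 := hreg z
    rw [degN] at h3
    have h4 : d ≤ (G.neighborSet z \ S).ncard + S.ncard := by omega
    have h5 : (d:ℝ) ≤ ((G.neighborSet z \ S).ncard : ℝ) + (S.ncard : ℝ) := by
      exact_mod_cast h4
    nlinarith [h5, h5δ, hSn, mul_pos hδ₀ hn0, mul_le_mul_of_nonneg_right
      (mul_le_mul_of_nonneg_left hδ5 hδ₀.le) hn0.le]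
  -- at most (1/2-δ)n vertices see no F-edge into N_G(z)\S
  have hT : ∀ z : Fin n,
      (({v : Fin n | ∀ a ∈ G.neighborSet z \ S, ¬ F.Adj a v}.ncard : ℝ)) < (1/2 - δ) * n := by
    intro z
    by_contra hcon
    push_neg at hcon
    have h1 := hF (G.neighborSet z \ S) _ (hA z) hcon
    have h2 : {e ∈ F.edgeSet | ∃ a ∈ G.neighborSet z \ S,
        ∃ b ∈ {v : Fin n | ∀ a ∈ G.neighborSet z \ S, ¬ F.Adj a v}, e = s(a, b)}.Nonempty := by
      apply Set.nonempty_of_ncard_ne_zero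
      rw [eBetween] at h1
      omega
    obtain ⟨e, heE, a, ha, b, hb, rfl⟩ := h2
    exact hb a ha (F.mem_edgeSet.mp heE)
  -- the candidate sets for x₂ and y₂
  set Xs : Set (Fin n) := {v | v ∉ S ∧ ∃ a ∈ G.neighborSet x \ S, F.Adj a v} with hXs
  set Ys : Set (Fin n) := {v | v ∉ S ∧ ∃ a ∈ G.neighborSet y \ S, F.Adj a v} with hYs
  have hcompl : ∀ z : Fin n,
      ({v : Fin n | v ∉ S ∧ ∃ a ∈ G.neighborSet z \ S, F.Adj a v}ᶜ.ncard : ℝ) < (n:ℝ)/2 := by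
    intro z
    have hsub : {v : Fin n | v ∉ S ∧ ∃ a ∈ G.neighborSet z \ S, F.Adj a v}ᶜ ⊆
        {v : Fin n | ∀ a ∈ G.neighborSet z \ S, ¬ F.Adj a v} ∪ S := by
      intro v hv
      simp only [Set.mem_compl_iff, Set.mem_setOf_eq, not_and, not_exists] at hv
      by_cases hvS : v ∈ S
      · exact Or.inr hvS
      · left
        intro a ha hadj
        exact (hv hvS) a ha hadj
    have h1 := Set.ncard_le_ncard hsub (Set.toFinite _)
    have h2 := Set.ncard_union_le {v : Fin n | ∀ a ∈ G.neighborSet z \ S, ¬ F.Adj a v} S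
    have h3 : ({v : Fin n | v ∉ S ∧ ∃ a ∈ G.neighborSet z \ S, F.Adj a v}ᶜ.ncard : ℝ) ≤
        ({v : Fin n | ∀ a ∈ G.neighborSet z \ S, ¬ F.Adj a v}.ncard : ℝ) + (S.ncard : ℝ) := by
      exact_mod_cast le_trans h1 h2
    have h4 := hT z
    linarith
  have hXcard : (n:ℝ)/2 < (Xs.ncard : ℝ) := by
    have h1 : Xs.ncard + Xsᶜ.ncard = n := by
      rw [Set.ncard_add_ncard_compl]; simp
    have h2 := hcompl x
    have h3 : (Xs.ncard : ℝ) + (Xsᶜ.ncard : ℝ) = (n:ℝ) := by exact_mod_cast h1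
    rw [hXs]
    linarith [h2, h3]
  have hYcard : (Ysᶜ.ncard : ℝ) < (n:ℝ)/2 := hcompl y
  have hlt : Ysᶜ.ncard < Xs.ncard := by
    have : (Ysᶜ.ncard : ℝ) < (Xs.ncard : ℝ) := lt_trans hYcard hXcard
    exact_mod_cast this
  obtain ⟨x₂, hx₂, y₂, hy₂, hadj⟩ := exists_adj_between G d hd0 hreg Xs Ys hlt
  obtain ⟨hx₂S, x₁, hx₁mem, hFx⟩ := hx₂
  obtain ⟨hy₂S, y₁, hy₁mem, hFy⟩ := hy₂
  exact ⟨x₁, x₂, y₁, y₂, hx₁mem.2, hx₂S, hy₁mem.2, hy₂S,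
    hx₁mem.1, hy₁mem.1, hadj, hFx, hFy⟩
end

section
/- Let 0 < δ < 1/2 and m > 0 be constants, let 0 < ν ≤ min(δ, m), and let τ satisfy 2δ ≤ τ < 1. Let R be a graph on n vertices such that there are at least mn² edges of R between any two vertex subsets A, B with |A| ≥ δ²n and |B| ≥ (1/2 - δ)n. Then R is a robust (ν,τ)-expander. -/
open SimpleGraph

/-- The robust `ν`-neighborhood of `S`: all vertices with at least `ν * n` neighbors in `S`. -/
def robustNbhd {V : Type*} [Fintype V] (G : SimpleGraph V) (ν : ℝ) (S : Set V) : Set V :=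
  {v | ν * (Fintype.card V : ℝ) ≤ (((G.neighborSet v) ∩ S).ncard : ℝ)}

/-- `G` is a robust `(ν, τ)`-expander. -/
def IsRobustExpander {V : Type*} [Fintype V] (G : SimpleGraph V) (ν τ : ℝ) : Prop :=
  ∀ S : Set V,
    τ * (Fintype.card V : ℝ) ≤ (S.ncard : ℝ) →
    (S.ncard : ℝ) ≤ (1 - τ) * (Fintype.card V : ℝ) →
    (S.ncard : ℝ) + ν * (Fintype.card V : ℝ) ≤ ((robustNbhd G ν S).ncard : ℝ)

lemma myNcardBiUnionLe {α β : Type*} [Fintype β] (s : Finset α) (f : α → Set β) :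
    (⋃ a ∈ s, f a).ncard ≤ ∑ a ∈ s, (f a).ncard := by
  classical
  induction s using Finset.induction with
  | empty => simp
  | insert _ _ h ih =>
    rename_i a s'
    rw [Finset.sum_insert h, Finset.set_biUnion_insert]
    exact (Set.ncard_union_le _ _).trans (add_le_add_right ih _)

lemma eBetween_comm {V : Type*} (G : SimpleGraph V) (A B : Set V) :
    eBetween G A B = eBetween G B A := by
  unfold eBetween
  congr 1
  ext e
  constructor
  · rintro ⟨he, a, ha, b, hb, rfl⟩
    exact ⟨he, b, hb, a, ha, Sym2.eq_swap⟩
  · rintro ⟨he, a, ha, b, hb, rfl⟩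
    exact ⟨he, b, hb, a, ha, Sym2.eq_swap⟩

/-- Let `0 < δ < 1/2`, `m > 0`, `0 < ν ≤ min(δ, m)` and
`2δ ≤ τ < 1`. If `R` is a graph on `n` vertices with at least `m n²` edges between
any two sets `A, B` with `|A| ≥ δ² n` and `|B| ≥ (1/2 - δ) n`, then `R` is a robust
`(ν, τ)`-expander. -/
theorem dense_between_sets_robust_expander (δ m ν τ : ℝ) (hδ₀ : 0 < δ)
    (hδ₁ : δ < 1 / 2) (hm : 0 < m) (hν₀ : 0 < ν) (hν₁ : ν ≤ min δ m)
    (hτ₀ : 2 * δ ≤ τ) (hτ₁ : τ < 1) :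
    ∀ (n : ℕ) (R : SimpleGraph (Fin n)),
      (∀ A B : Set (Fin n), δ ^ 2 * (n : ℝ) ≤ (A.ncard : ℝ) →
        (1 / 2 - δ) * (n : ℝ) ≤ (B.ncard : ℝ) →
        m * (n : ℝ) ^ 2 ≤ (eBetween R A B : ℝ)) →
      IsRobustExpander R ν τ := by
  intro n R hR S hS1 hS2
  classical
  rw [Fintype.card_fin] at *
  rcases Nat.eq_zero_or_pos n with hn | hn
  · subst hn
    have : S = ∅ := Set.eq_empty_of_isEmpty S
    simp [this]
  have hn' : (0 : ℝ) < n := by exact_mod_cast hn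
  set T : Set (Fin n) := (robustNbhd R ν S)ᶜ with hTdef
  set F : Finset (Fin n) := (Set.toFinite T).toFinset with hFdef
  -- edge-count upper bound
  have hsub : {e ∈ R.edgeSet | ∃ a ∈ T, ∃ b ∈ S, e = s(a, b)} ⊆
      ⋃ a ∈ F, (fun b => s(a, b)) '' (R.neighborSet a ∩ S) := by
    rintro e ⟨he, a, haT, b, hbS, rfl⟩
    simp only [Set.mem_iUnion]
    refine ⟨a, (Set.Finite.mem_toFinset _).2 haT, b, ⟨?_, hbS⟩, rfl⟩
    exact he
  have h1 : eBetween R T S ≤ ∑ a ∈ F, (R.neighborSet a ∩ S).ncard := by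
    refine (Set.ncard_le_ncard hsub (Set.toFinite _)).trans ?_
    refine (myNcardBiUnionLe F _).trans ?_
    exact Finset.sum_le_sum fun a _ => Set.ncard_image_le (Set.toFinite _)
  have hcardT : F.card = T.ncard := by
    rw [hFdef, Set.ncard_eq_toFinset_card']
    congr 1
    ext x
    simp [hTdef]
  have hTn : (T.ncard : ℝ) ≤ n := by
    exact_mod_cast (Set.ncard_le_ncard (Set.subset_univ T) (Set.toFinite _)).trans
      (le_of_eq (by rw [Set.ncard_univ, Nat.card_eq_fintype_card, Fintype.card_fin]))
  have hνδ : ν ≤ δ := le_trans hν₁ (min_le_left _ _)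
  have hνm : ν ≤ m := le_trans hν₁ (min_le_right _ _)
  have hEdge : T.Nonempty → (eBetween R T S : ℝ) < m * (n : ℝ) ^ 2 := by
    intro hTne
    have hFne : F.Nonempty := by
      obtain ⟨x, hx⟩ := hTne
      exact ⟨x, (Set.Finite.mem_toFinset _).2 hx⟩
    have h2 : (∑ a ∈ F, ((R.neighborSet a ∩ S).ncard : ℝ)) < ∑ _a ∈ F, ν * n := by
      refine Finset.sum_lt_sum_of_nonempty hFne fun a haF => ?_
      have haT : a ∈ T := (Set.Finite.mem_toFinset _).1 haF
      have : ¬ (ν * (n : ℝ) ≤ ((R.neighborSet a ∩ S).ncard : ℝ)) := by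
        simpa [hTdef, robustNbhd] using haT
      linarith
    have h3 : (eBetween R T S : ℝ) < F.card * (ν * n) := by
      rw [Finset.sum_const, nsmul_eq_mul] at h2
      calc (eBetween R T S : ℝ) ≤ ∑ a ∈ F, ((R.neighborSet a ∩ S).ncard : ℝ) := by
            push_cast
            exact_mod_cast h1
        _ < _ := h2
    have hFn : (F.card : ℝ) ≤ n := by rw [hcardT]; exact hTn
    calc (eBetween R T S : ℝ) < F.card * (ν * n) := h3
      _ ≤ n * (ν * n) := by
          apply mul_le_mul_of_nonneg_right hFn
          positivity
      _ ≤ m * (n : ℝ) ^ 2 := by nlinarith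
  have hRNcard : (robustNbhd R ν S).ncard = n - T.ncard := by
    have := Set.ncard_add_ncard_compl (robustNbhd R ν S) (Set.toFinite _) (Set.toFinite _)
    rw [Nat.card_eq_fintype_card, Fintype.card_fin] at this
    rw [← hTdef] at this
    omega
  have hRNreal : (n : ℝ) - T.ncard ≤ ((robustNbhd R ν S).ncard : ℝ) := by
    rw [hRNcard]
    have : T.ncard ≤ n := by exact_mod_cast hTn
    push_cast [Nat.cast_sub this]
    exact le_refl _
  by_cases hScase : (1 / 2 - δ) * (n : ℝ) ≤ (S.ncard : ℝ)
  · -- Case 1: S is large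
    have hTsmall : (T.ncard : ℝ) < δ ^ 2 * n := by
      by_contra hc
      push_neg at hc
      have hTne : T.Nonempty := by
        rw [Set.nonempty_iff_ne_empty]
        intro h
        rw [h, Set.ncard_empty] at hc
        push_cast at hc
        nlinarith [mul_pos (pow_pos hδ₀ 2) hn']
      exact absurd (hR T S hc hScase) (not_le.2 (hEdge hTne))
    have hprod1 : ν * (n : ℝ) ≤ δ * n := mul_le_mul_of_nonneg_right hνδ hn'.le
    have hprod2 : 2 * δ * (n : ℝ) ≤ τ * n := mul_le_mul_of_nonneg_right hτ₀ hn'.le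
    have hprod3 : δ ^ 2 * (n : ℝ) ≤ δ * n :=
      mul_le_mul_of_nonneg_right (by nlinarith) hn'.le
    linarith
  · -- Case 2: S is small
    push_neg at hScase
    have hTsmall : (T.ncard : ℝ) < (1 / 2 - δ) * n := by
      by_contra hc
      push_neg at hc
      have hTne : T.Nonempty := by
        rw [Set.nonempty_iff_ne_empty]
        intro h
        rw [h, Set.ncard_empty] at hc
        push_cast at hc
        nlinarith [mul_pos (show (0:ℝ) < 1/2 - δ by linarith) hn']
      have hprod2 : 2 * δ * (n : ℝ) ≤ τ * n := mul_le_mul_of_nonneg_right hτ₀ hn'.le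
      have hprod3 : δ ^ 2 * (n : ℝ) ≤ δ * n :=
        mul_le_mul_of_nonneg_right (by nlinarith) hn'.le
      have hprod4 : (0:ℝ) < δ * n := mul_pos hδ₀ hn'
      have hSbig : δ ^ 2 * (n : ℝ) ≤ (S.ncard : ℝ) := by linarith
      have := hR S T hSbig hc
      rw [eBetween_comm R S T] at this
      exact absurd this (not_le.2 (hEdge hTne))
    have hprod1 : ν * (n : ℝ) ≤ δ * n := mul_le_mul_of_nonneg_right hνδ hn'.le
    have hprod4 : (0:ℝ) < δ * n := mul_pos hδ₀ hn'
    linarith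
end

section
/- Every r-regular graph on n vertices (with r ≥ 1) contains at most (r!)^{n/r} Hamilton cycles. -/
open SimpleGraph

open Finset in
lemma conv_step {X : Type*} [DecidableEq X] (B : Finset X) (P : X → ℕ) (a : ℕ)
    (hB : B.card ≤ a) (hpos : ∀ x ∈ B, 1 ≤ P x) :
    (∑ x ∈ B, P x) ^ (∑ x ∈ B, P x) ≤ a ^ (∑ x ∈ B, P x) * ∏ x ∈ B, (P x) ^ (P x) := by
  rcases B.eq_empty_or_nonempty with rfl | hne
  · simp
  set S := ∑ x ∈ B, P x with hS
  have hS1 : 1 ≤ S := by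
    obtain ⟨x, hx⟩ := hne
    calc 1 ≤ P x := hpos x hx
    _ ≤ S := Finset.single_le_sum (f := P) (fun _ _ => Nat.zero_le _) hx
  have hSR : (0:ℝ) < S := by exact_mod_cast hS1
  have ha : 1 ≤ a := le_trans (by exact_mod_cast card_pos.mpr hne) hB
  -- AM-GM
  have key : ∏ x ∈ B, ((S : ℝ) / P x) ^ ((P x : ℝ) / S) ≤ (a : ℝ) := by
    have := Real.geom_mean_le_arith_mean_weighted B (fun x => (P x : ℝ) / S)
      (fun x => (S : ℝ) / P x) (fun i _ => by positivity)
      (by rw [← Finset.sum_div]; rw [show ∑ i ∈ B, ((P i:ℝ)) = (S:ℝ) by push_cast [hS]; ring]; field_simp) (fun i _ => by positivity)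
    refine this.trans ?_
    have : ∀ x ∈ B, ((P x : ℝ) / S) * ((S:ℝ) / P x) = 1 := by
      intro x hx
      have h1 : (0:ℝ) < P x := by exact_mod_cast hpos x hx
      field_simp
    rw [Finset.sum_congr rfl this]
    simp only [Finset.sum_const, nsmul_eq_mul, mul_one]
    exact_mod_cast hB
  have key2 : ∏ x ∈ B, ((S : ℝ) / P x) ^ (P x) ≤ (a:ℝ) ^ S := by
    have hnn : (0:ℝ) ≤ ∏ x ∈ B, ((S : ℝ) / P x) ^ ((P x : ℝ) / S) :=
      Finset.prod_nonneg (fun i _ => Real.rpow_nonneg (by positivity) _)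
    have := pow_le_pow_left₀ hnn key S
    calc ∏ x ∈ B, ((S : ℝ) / P x) ^ (P x)
        = (∏ x ∈ B, ((S : ℝ) / P x) ^ ((P x : ℝ) / S)) ^ S := by
          rw [← Finset.prod_pow]
          refine Finset.prod_congr rfl fun x hx => ?_
          have h1 : (0:ℝ) < P x := by exact_mod_cast hpos x hx
          rw [← Real.rpow_natCast (((S : ℝ) / P x) ^ ((P x : ℝ) / S)) S,
            ← Real.rpow_natCast ((S : ℝ) / P x) (P x), ← Real.rpow_mul (by positivity)]
          congr 1
          field_simp
      _ ≤ (a:ℝ) ^ S := this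
  have main : ((S:ℝ)) ^ S ≤ (a:ℝ) ^ S * ∏ x ∈ B, (P x : ℝ) ^ (P x) := by
    have : ((S:ℝ)) ^ S = (∏ x ∈ B, ((S:ℝ) / P x) ^ (P x)) * ∏ x ∈ B, (P x : ℝ) ^ (P x) := by
      rw [← Finset.prod_mul_distrib]
      have : ∀ x ∈ B, ((S:ℝ) / P x) ^ (P x) * (P x : ℝ) ^ (P x) = (S:ℝ) ^ (P x) := by
        intro x hx
        have h1 : (0:ℝ) < P x := by exact_mod_cast hpos x hx
        rw [← mul_pow]
        congr 1
        field_simp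
      rw [Finset.prod_congr rfl this, Finset.prod_pow_eq_pow_sum]
    rw [this]
    exact mul_le_mul_of_nonneg_right key2 (Finset.prod_nonneg fun x _ => by positivity)
  have := main
  push_cast at this
  exact_mod_cast this

open Finset in
lemma encode {X : Type*} [DecidableEq X] : ∀ {n : ℕ} (S : Finset (Fin n → X))
    (A : Fin n → (Fin n → X) → Finset X),
    (∀ (j : Fin n) (σ σ' : Fin n → X), (∀ j' : Fin n, j' < j → σ j' = σ' j') → A j σ = A j σ') →
    (∀ σ ∈ S, ∀ j, σ j ∈ A j σ) →
    S.card ^ S.card ≤ ∏ σ ∈ S, ∏ j, (A j σ).card := by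
  intro n
  induction n with
  | zero =>
    intro S A hA hmem
    have : S.card ≤ 1 := Finset.card_le_one.mpr (fun a _ b _ => Subsingleton.elim a b)
    interval_cases h : S.card <;> simp_all
  | succ n IH =>
    intro S A hA hmem
    rcases S.eq_empty_or_nonempty with rfl | ⟨σ₀, hσ₀⟩
    · simp
    classical
    set B := S.image (fun σ => σ 0) with hB
    have hA0 : ∀ σ, A 0 σ = A 0 σ₀ := fun σ => hA 0 σ σ₀ (fun j' hj' => absurd hj' (by simp [Fin.not_lt_zero]))
    set a := (A 0 σ₀).card with ha
    have hBa : B.card ≤ a := by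
      apply Finset.card_le_card
      intro x hx
      obtain ⟨σ, hσ, rfl⟩ := Finset.mem_image.mp hx
      rw [← hA0 σ]; exact hmem σ hσ 0
    have hsplit : ∀ σ : Fin (n+1) → X, ∏ j, (A j σ).card
        = (A 0 σ₀).card * ∏ j : Fin n, (A j.succ σ).card := by
      intro σ; rw [Fin.prod_univ_succ, hA0 σ]
    have hpart : ∀ (f : (Fin (n+1) → X) → ℕ), ∏ σ ∈ S, f σ = ∏ x ∈ B, ∏ σ ∈ S.filter (fun σ => σ 0 = x), f σ := by
      intro f
      exact (Finset.prod_fiberwise_of_maps_to (fun σ hσ => Finset.mem_image_of_mem _ hσ) f).symm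
    have hcard : S.card = ∑ x ∈ B, (S.filter (fun σ => σ 0 = x)).card :=
      Finset.card_eq_sum_card_fiberwise (fun σ hσ => Finset.mem_image_of_mem _ hσ)
    -- per-fiber bound via IH
    have hfiber : ∀ x ∈ B, (S.filter (fun σ => σ 0 = x)).card ^ (S.filter (fun σ => σ 0 = x)).card
        ≤ ∏ σ ∈ S.filter (fun σ => σ 0 = x), ∏ j : Fin n, (A j.succ σ).card := by
      intro x hx
      set Sx := S.filter (fun σ => σ 0 = x) with hSx
      have hinj : Set.InjOn (fun σ : Fin (n+1) → X => σ ∘ Fin.succ) Sx := by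
        intro σ hσ σ' hσ' h
        have h0 : σ 0 = x := (Finset.mem_filter.mp hσ).2
        have h0' : σ' 0 = x := (Finset.mem_filter.mp hσ').2
        funext j
        refine Fin.cases ?_ ?_ j
        · rw [h0, h0']
        · intro k; exact congrFun h k
      have hcons : ∀ σ ∈ Sx, Fin.cons x (σ ∘ Fin.succ) = σ := by
        intro σ hσ
        have h0 : σ 0 = x := (Finset.mem_filter.mp hσ).2
        funext j
        refine Fin.cases ?_ ?_ j
        · simpa using h0.symm
        · intro k; simp
      set S' := Sx.image (fun σ => σ ∘ Fin.succ) with hS'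
      set A' : Fin n → (Fin n → X) → Finset X := fun j g => A j.succ (Fin.cons x g) with hA'
      have hA'prop : ∀ (j : Fin n) (g g' : Fin n → X), (∀ j' : Fin n, j' < j → g j' = g' j') → A' j g = A' j g' := by
        intro j g g' hgg
        apply hA
        intro j' hj'
        revert hj'
        refine Fin.cases ?_ ?_ j'
        · intro _; simp
        · intro k hj'
          simp only [Fin.cons_succ]
          exact hgg _ (Fin.succ_lt_succ_iff.mp hj')
      have hmem' : ∀ g ∈ S', ∀ j : Fin n, g j ∈ A' j g := by
        intro g hg j
        obtain ⟨σ, hσ, rfl⟩ := Finset.mem_image.mp hg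
        show σ j.succ ∈ A j.succ (Fin.cons x (σ ∘ Fin.succ))
        rw [hcons σ hσ]
        exact hmem σ (Finset.mem_filter.mp hσ).1 j.succ
      have hIH := IH S' A' hA'prop hmem'
      have hcardeq : S'.card = Sx.card := Finset.card_image_of_injOn hinj
      have hprodeq : ∏ g ∈ S', ∏ j : Fin n, (A' j g).card
          = ∏ σ ∈ Sx, ∏ j : Fin n, (A j.succ σ).card := by
        rw [hS', Finset.prod_image (fun σ hσ σ' hσ' h => hinj hσ hσ' h)]
        refine Finset.prod_congr rfl fun σ hσ => Finset.prod_congr rfl fun j _ => ?_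
        show (A j.succ (Fin.cons x (σ ∘ Fin.succ))).card = _
        rw [hcons σ hσ]
      rw [hcardeq, hprodeq] at hIH
      exact hIH
    -- combine
    calc S.card ^ S.card
        ≤ a ^ S.card * ∏ x ∈ B, (S.filter (fun σ => σ 0 = x)).card ^ (S.filter (fun σ => σ 0 = x)).card := by
          rw [hcard]
          exact conv_step B _ a hBa (fun x hx => by
            obtain ⟨σ, hσ, h⟩ := Finset.mem_image.mp hx
            exact Finset.card_pos.mpr ⟨σ, Finset.mem_filter.mpr ⟨hσ, h⟩⟩)
      _ ≤ a ^ S.card * ∏ x ∈ B, ∏ σ ∈ S.filter (fun σ => σ 0 = x), ∏ j : Fin n, (A j.succ σ).card := by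
          exact Nat.mul_le_mul_left _ (Finset.prod_le_prod (fun _ _ => Nat.zero_le _) hfiber)
      _ = ∏ σ ∈ S, ∏ j, (A j σ).card := by
          rw [Finset.prod_congr rfl (fun σ (_ : σ ∈ S) => hsplit σ), Finset.prod_mul_distrib,
            Finset.prod_const]
          rw [hpart (fun σ => ∏ j : Fin n, (A j.succ σ).card)]

open Finset in
lemma prod_rank {α : Type*} [LinearOrder α] [DecidableEq α] :
    ∀ (S : Finset α), ∏ s ∈ S, (S.card - (S.filter (fun u => u < s)).card) = S.card.factorial := by
  suffices h : ∀ (c : ℕ) (S : Finset α), S.card = c →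
      ∏ s ∈ S, (S.card - (S.filter (fun u => u < s)).card) = S.card.factorial by
    exact fun S => h S.card S rfl
  intro c
  induction c with
  | zero => intro S hn; rw [Finset.card_eq_zero.mp hn]; simp
  | succ m IH =>
    intro S hn
    have hne : S.Nonempty := Finset.card_pos.mp (by omega)
    set x := S.min' hne with hx
    have hxS : x ∈ S := S.min'_mem hne
    have hSx : S = insert x (S.erase x) := (Finset.insert_erase hxS).symm
    have hcard' : (S.erase x).card = m := by
      rw [Finset.card_erase_of_mem hxS, hn]; omega
    have hxnot : x ∉ S.erase x := Finset.notMem_erase x S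
    rw [← Finset.mul_prod_erase S _ hxS]
    have h1 : (S.filter (fun u => u < x)).card = 0 := by
      rw [Finset.card_eq_zero, Finset.filter_eq_empty_iff]
      intro u hu
      exact not_lt.mpr (S.min'_le u hu)
    have h2 : ∀ s ∈ S.erase x, (S.filter (fun u => u < s)).card
        = ((S.erase x).filter (fun u => u < s)).card + 1 := by
      intro s hs
      have hsS := Finset.mem_of_mem_erase hs
      have hxs : x < s := S.min'_lt_of_mem_erase_min' hne hs
      have : S.filter (fun u => u < s) = insert x ((S.erase x).filter (fun u => u < s)) := by
        ext u
        simp only [Finset.mem_filter, Finset.mem_insert, Finset.mem_erase]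
        constructor
        · rintro ⟨huS, hus⟩
          by_cases hux : u = x
          · left; exact hux
          · right; exact ⟨⟨hux, huS⟩, hus⟩
        · rintro (rfl | ⟨⟨_, huS⟩, hus⟩)
          · exact ⟨hxS, hxs⟩
          · exact ⟨huS, hus⟩
      rw [this, Finset.card_insert_of_notMem (fun hc => hxnot (Finset.mem_of_mem_filter x hc))]
    have h3 : ∀ s ∈ S.erase x, S.card - (S.filter (fun u => u < s)).card
        = (S.erase x).card - ((S.erase x).filter (fun u => u < s)).card := by
      intro s hs
      rw [h2 s hs, hn, hcard']
      omega
    rw [Finset.prod_congr rfl h3, IH _ hcard', h1, hn, Nat.sub_zero, hcard']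
    rfl

lemma perm_eval_fiber_card {β : Type*} [DecidableEq β] [Fintype β] (a b b' : β) :
    (Finset.univ.filter (fun τ : Equiv.Perm β => τ a = b)).card
      = (Finset.univ.filter (fun τ : Equiv.Perm β => τ a = b')).card := by
  apply Finset.card_bij' (fun τ _ => Equiv.swap b b' * τ) (fun τ _ => Equiv.swap b b' * τ)
  · intro τ hτ
    simp only [Finset.mem_filter, Finset.mem_univ, true_and] at hτ ⊢
    simp [Equiv.Perm.mul_apply, hτ]
  · intro τ hτ
    simp only [Finset.mem_filter, Finset.mem_univ, true_and] at hτ ⊢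
    simp [Equiv.Perm.mul_apply, hτ, Equiv.swap_apply_right]
  · intro τ _
    simp [← mul_assoc]
  · intro τ _
    simp [← mul_assoc]

lemma prod_perm_eval {β : Type*} [DecidableEq β] [Fintype β] (a : β) :
    ∃ m : ℕ, m * Fintype.card β = (Fintype.card β).factorial ∧
      ∀ g : β → ℕ, ∏ τ : Equiv.Perm β, g (τ a) = ∏ b : β, (g b) ^ m := by
  set m := (Finset.univ.filter (fun τ : Equiv.Perm β => τ a = a)).card with hm
  have hfib : ∀ b : β, (Finset.univ.filter (fun τ : Equiv.Perm β => τ a = b)).card = m :=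
    fun b => perm_eval_fiber_card a b a
  refine ⟨m, ?_, ?_⟩
  · have := Finset.card_eq_sum_card_fiberwise
      (f := fun τ : Equiv.Perm β => τ a) (s := Finset.univ) (t := Finset.univ)
      (fun τ _ => Finset.mem_univ _)
    rw [Finset.sum_congr rfl (fun b _ => hfib b), Finset.sum_const, smul_eq_mul] at this
    rw [mul_comm]
    rw [Finset.card_univ, Fintype.card_perm] at this
    rw [Finset.card_univ] at this
    exact this.symm
  · intro g
    rw [← Finset.prod_fiberwise_of_maps_to
      (g := fun τ : Equiv.Perm β => τ a) (t := Finset.univ) (fun τ _ => Finset.mem_univ _)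
      (fun τ => g (τ a))]
    refine Finset.prod_congr rfl fun b _ => ?_
    rw [← hfib b]
    calc ∏ τ ∈ Finset.univ.filter (fun τ : Equiv.Perm β => τ a = b), g (τ a)
        = ∏ _τ ∈ Finset.univ.filter (fun τ : Equiv.Perm β => τ a = b), g b :=
          Finset.prod_congr rfl (fun τ hτ => by rw [(Finset.mem_filter.mp hτ).2])
      _ = _ := Finset.prod_const _

open Finset in
lemma lemmaB {n r : ℕ} (T : Finset (Fin n)) (i : Fin n) (hi : i ∈ T) (hT : T.card = r) :
    (∏ π : Equiv.Perm (Fin n),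
      (r - (Finset.univ.filter (fun u => π u < π i ∧ u ∈ T)).card)) ^ r
      = (r.factorial) ^ (n.factorial) := by
  classical
  have hr : 1 ≤ r := by
    rw [← hT]; exact Finset.card_pos.mpr ⟨i, hi⟩
  set β := {x : Fin n // x ∈ T}
  have hcardβ : Fintype.card β = r := by rw [Fintype.card_coe, hT]
  set a : β := ⟨i, hi⟩ with ha
  set f : Equiv.Perm (Fin n) → ℕ :=
    fun π => r - (Finset.univ.filter (fun u => π u < π i ∧ u ∈ T)).card with hf
  set A := ∏ π : Equiv.Perm (Fin n), f π with hA
  set ext : Equiv.Perm β → Equiv.Perm (Fin n) := fun τ => Equiv.Perm.ofSubtype τ with hext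
  have hext_mem : ∀ (τ : Equiv.Perm β) (u : Fin n), u ∈ T → ext τ u ∈ T := by
    intro τ u hu
    rw [hext, Equiv.Perm.ofSubtype_apply_of_mem τ hu]
    exact (τ ⟨u, hu⟩).2
  have hinv1 : ∀ (τ : Equiv.Perm β) (u : Fin n), ext τ (ext τ⁻¹ u) = u := by
    intro τ u
    rw [hext, ← Equiv.Perm.mul_apply, ← map_mul, mul_inv_cancel]; simp
  have hinv2 : ∀ (τ : Equiv.Perm β) (u : Fin n), ext τ⁻¹ (ext τ u) = u := by
    intro τ u
    rw [hext, ← Equiv.Perm.mul_apply, ← map_mul, inv_mul_cancel]; simp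
  have hext_memiff : ∀ (τ : Equiv.Perm β) (u : Fin n), ext τ u ∈ T ↔ u ∈ T := by
    intro τ u
    constructor
    · intro h
      by_contra hu
      rw [hext, Equiv.Perm.ofSubtype_apply_of_not_mem τ hu] at h
      exact hu h
    · exact hext_mem τ u
  -- step 1
  have step1 : A ^ (r.factorial) = ∏ τ : Equiv.Perm β, ∏ π : Equiv.Perm (Fin n), f (π * ext τ) := by
    have h1 : ∀ τ : Equiv.Perm β, ∏ π : Equiv.Perm (Fin n), f (π * ext τ) = A := by
      intro τ
      exact (Fintype.prod_equiv (Equiv.mulRight (ext τ)) (fun π => f (π * ext τ)) f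
        (fun π => rfl)).symm ▸ rfl
    rw [Finset.prod_congr rfl (fun τ _ => h1 τ), Finset.prod_const, Finset.card_univ,
      Fintype.card_perm, hcardβ]
  -- step 2
  have step2 : ∀ (π : Equiv.Perm (Fin n)) (τ : Equiv.Perm β),
      f (π * ext τ) = r - (T.filter (fun u => π u < π ((τ a : β) : Fin n))).card := by
    intro π τ
    have hτa : ext τ i = ((τ a : β) : Fin n) := Equiv.Perm.ofSubtype_apply_of_mem τ hi
    show r - (Finset.univ.filter (fun u => π (ext τ u) < π (ext τ i) ∧ u ∈ T)).card
      = r - (T.filter (fun u => π u < π ((τ a : β) : Fin n))).card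
    rw [← hτa]
    congr 1
    apply Finset.card_bij' (fun u _ => ext τ u) (fun u _ => ext τ⁻¹ u)
    · intro u hu
      simp only [Finset.mem_filter, Finset.mem_univ, true_and] at hu
      exact Finset.mem_filter.mpr ⟨hext_mem τ u hu.2, hu.1⟩
    · intro v hv
      have hv' := Finset.mem_filter.mp hv
      refine Finset.mem_filter.mpr ⟨Finset.mem_univ _, ?_, ?_⟩
      · rw [hinv1]; exact hv'.2
      · exact (hext_memiff τ⁻¹ v).mpr hv'.1
    · intro u _
      exact hinv2 τ u
    · intro u _
      exact hinv1 τ u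
  -- step 4
  have step4 : ∀ π : Equiv.Perm (Fin n),
      ∏ t : β, (r - (T.filter (fun u => π u < π (t : Fin n))).card) = r.factorial := by
    intro π
    rw [Finset.prod_coe_sort T (fun t => r - (T.filter (fun u => π u < π t)).card)]
    have hScard : (T.image π).card = r := by
      rw [Finset.card_image_of_injective _ π.injective, hT]
    have hfil : ∀ t ∈ T, (T.filter (fun u => π u < π t)).card
        = ((T.image π).filter (fun v => v < π t)).card := by
      intro t _
      rw [Finset.filter_image, Finset.card_image_of_injective _ π.injective]
    calc ∏ t ∈ T, (r - (T.filter (fun u => π u < π t)).card)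
        = ∏ t ∈ T, ((T.image π).card - ((T.image π).filter (fun v => v < π t)).card) := by
          refine Finset.prod_congr rfl fun t ht => ?_
          rw [hfil t ht, hScard]
      _ = ∏ s ∈ T.image π, ((T.image π).card - ((T.image π).filter (fun v => v < s)).card) := by
          rw [Finset.prod_image (fun u _ v _ h => π.injective h)]
      _ = r.factorial := by rw [prod_rank (T.image π), hScard]
  -- step 3 : fiber decomposition
  obtain ⟨m, hm1, hm2⟩ := prod_perm_eval (β := β) a
  rw [hcardβ] at hm1
  have step3 : ∀ π : Equiv.Perm (Fin n),
      ∏ τ : Equiv.Perm β, f (π * ext τ) = (r.factorial) ^ m := by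
    intro π
    rw [Finset.prod_congr rfl (fun τ _ => step2 π τ),
      hm2 (fun t => r - (T.filter (fun u => π u < π (t : Fin n))).card),
      Finset.prod_pow, step4 π]
  -- assemble
  have hmain : A ^ (r.factorial) = ((r.factorial) ^ (n.factorial)) ^ m := by
    rw [step1, Finset.prod_comm]
    rw [Finset.prod_congr rfl (fun π _ => step3 π), Finset.prod_const, Finset.card_univ,
      Fintype.card_perm, Fintype.card_fin, ← pow_mul, ← pow_mul, Nat.mul_comm]
  have hm0 : 1 ≤ m := by
    rcases Nat.eq_zero_or_pos m with h | h
    · exfalso; rw [h, zero_mul] at hm1; exact (Nat.factorial_pos r).ne hm1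
    · exact h
  apply Nat.pow_left_injective (n := m) (by omega)
  show (A ^ r) ^ m = ((r.factorial) ^ (n.factorial)) ^ m
  rw [← pow_mul, ← hmain, ← hm1, pow_mul, mul_comm]
  ring

open Finset in
lemma bregman_core {n r : ℕ} (hr : 1 ≤ r) (N : Fin n → Finset (Fin n))
    (hN : ∀ v, (N v).card = r) :
    (Finset.univ.filter (fun σ : Equiv.Perm (Fin n) => ∀ v, σ v ∈ N v)).card ^ r
      ≤ (r.factorial) ^ n := by
  classical
  set P := Finset.univ.filter (fun σ : Equiv.Perm (Fin n) => ∀ v, σ v ∈ N v) with hP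
  set Pc := P.card with hPc
  rcases Nat.eq_zero_or_pos Pc with hPc0 | hPcpos
  · rw [hPc0, Nat.zero_pow (by omega)]
    exact Nat.zero_le _
  -- R function
  set R : Equiv.Perm (Fin n) → Equiv.Perm (Fin n) → Fin n → ℕ :=
    fun σ π i => ((N i) \ ((Finset.univ.filter fun u => π u < π i).image σ)).card with hR
  -- claim 1 : value of R via ranks
  have claim1 : ∀ σ ∈ P, ∀ (π : Equiv.Perm (Fin n)) (i : Fin n),
      R σ π i = r - (Finset.univ.filter (fun u => π u < π i ∧ u ∈
        (Finset.univ.filter (fun w => σ w ∈ N i)))).card := by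
    intro σ hσ π i
    have hsub : (N i) ∩ ((Finset.univ.filter fun u => π u < π i).image σ)
        = (Finset.univ.filter (fun u => π u < π i ∧ σ u ∈ N i)).image σ := by
      ext v
      simp only [Finset.mem_inter, Finset.mem_image, Finset.mem_filter, Finset.mem_univ, true_and]
      constructor
      · rintro ⟨hv, u, hu, rfl⟩
        exact ⟨u, ⟨hu, hv⟩, rfl⟩
      · rintro ⟨u, ⟨hu, hv⟩, rfl⟩
        exact ⟨hv, u, hu, rfl⟩
    have hcard : ((N i) \ ((Finset.univ.filter fun u => π u < π i).image σ)).card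
        = (N i).card - ((N i) ∩ ((Finset.univ.filter fun u => π u < π i).image σ)).card := by
      have h := Finset.card_sdiff_add_card_inter (N i)
        ((Finset.univ.filter fun u => π u < π i).image σ)
      omega
    rw [hR]
    simp only []
    rw [hcard, hsub, Finset.card_image_of_injective _ σ.injective, hN i]
    congr 2
    ext u
    simp only [Finset.mem_filter, Finset.mem_univ, true_and]
  -- T sets
  have hTcard : ∀ σ ∈ P, ∀ i : Fin n,
      (Finset.univ.filter (fun w => σ w ∈ N i)).card = r := by
    intro σ hσ i
    rw [← hN i]
    apply Finset.card_bij' (fun u _ => σ u) (fun v _ => σ.symm v)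
    · intro u hu
      exact (Finset.mem_filter.mp hu).2
    · intro v hv
      simp [hv]
    · intro u _; simp
    · intro v _; simp
  have hTmem : ∀ σ ∈ P, ∀ i : Fin n, i ∈ Finset.univ.filter (fun w => σ w ∈ N i) := by
    intro σ hσ i
    simp only [Finset.mem_filter, Finset.mem_univ, true_and]
    exact (Finset.mem_filter.mp hσ).2 i
  -- lemma B application
  have hBapp : ∀ σ ∈ P, ∀ i : Fin n, (∏ π : Equiv.Perm (Fin n), R σ π i) ^ r
      = (r.factorial) ^ (n.factorial) := by
    intro σ hσ i
    rw [Finset.prod_congr rfl (fun π _ => claim1 σ hσ π i)]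
    exact lemmaB _ i (hTmem σ hσ i) (hTcard σ hσ i)
  -- encode application per π
  have hEnc : ∀ π : Equiv.Perm (Fin n), Pc ^ Pc ≤ ∏ σ ∈ P, ∏ i, R σ π i := by
    intro π
    set Sπ := P.image (fun σ : Equiv.Perm (Fin n) => (fun j => σ (π⁻¹ j) : Fin n → Fin n))
      with hSπ
    have hinj : Set.InjOn (fun σ : Equiv.Perm (Fin n) => (fun j => σ (π⁻¹ j) : Fin n → Fin n))
        P := by
      intro σ hσ σ' hσ' h
      apply Equiv.coe_fn_injective
      funext u
      have h2 : σ (π⁻¹ (π u)) = σ' (π⁻¹ (π u)) := congrFun h (π u)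
      simpa using h2
    set A : Fin n → (Fin n → Fin n) → Finset (Fin n) :=
      fun j g => (N (π⁻¹ j)) \ ((Finset.univ.filter fun j' => j' < j).image g) with hAdef
    have hA : ∀ (j : Fin n) (g g' : Fin n → Fin n),
        (∀ j' : Fin n, j' < j → g j' = g' j') → A j g = A j g' := by
      intro j g g' hgg
      rw [hAdef]
      simp only []
      congr 1
      apply Finset.image_congr
      intro j' hj'
      exact hgg j' (by simpa using hj')
    have hmem : ∀ g ∈ Sπ, ∀ j, g j ∈ A j g := by
      intro g hg j
      obtain ⟨σ, hσ, rfl⟩ := Finset.mem_image.mp hg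
      rw [hAdef]
      simp only [Finset.mem_sdiff]
      constructor
      · exact (Finset.mem_filter.mp hσ).2 (π⁻¹ j)
      · intro hc
        obtain ⟨j', hj', heq⟩ := Finset.mem_image.mp hc
        have hj'lt : j' < j := by simpa using hj'
        have : j' = j := by
          have := σ.injective (heq : σ (π⁻¹ j') = σ (π⁻¹ j))
          have := π⁻¹.injective this
          exact this
        omega
    have henc := encode Sπ A hA hmem
    have hcardSπ : Sπ.card = Pc := Finset.card_image_of_injOn hinj
    rw [hcardSπ] at henc
    refine henc.trans (le_of_eq ?_)
    rw [hSπ, Finset.prod_image (fun σ hσ σ' hσ' h => hinj hσ hσ' h)]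
    refine Finset.prod_congr rfl fun σ hσ => ?_
    refine (Fintype.prod_equiv π (fun i => R σ π i)
      (fun j => (A j (fun j' => σ (π⁻¹ j'))).card) (fun i => ?_)).symm
    show ((N i) \ ((Finset.univ.filter fun u => π u < π i).image σ)).card
      = ((N (π⁻¹ (π i))) \ ((Finset.univ.filter fun j' => j' < π i).image
          (fun j' => σ (π⁻¹ j')))).card
    congr 2
    · simp
    · ext v
      simp only [Finset.mem_image, Finset.mem_filter, Finset.mem_univ, true_and]
      constructor
      · rintro ⟨u, hu, rfl⟩
        exact ⟨π u, hu, by simp⟩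
      · rintro ⟨j', hj', rfl⟩
        exact ⟨π⁻¹ j', by simpa using hj', rfl⟩
  -- assemble
  have hA1 : (Pc ^ Pc) ^ (n.factorial) ≤ ∏ π : Equiv.Perm (Fin n), ∏ σ ∈ P, ∏ i, R σ π i := by
    calc (Pc ^ Pc) ^ (n.factorial)
        = ∏ _π : Equiv.Perm (Fin n), Pc ^ Pc := by
          rw [Finset.prod_const, Finset.card_univ, Fintype.card_perm, Fintype.card_fin]
      _ ≤ _ := Finset.prod_le_prod' (fun π _ => hEnc π)
  have hA2 : (∏ π : Equiv.Perm (Fin n), ∏ σ ∈ P, ∏ i, R σ π i) ^ r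
      = ((r.factorial) ^ n) ^ (Pc * n.factorial) := by
    have hswap : ∏ π : Equiv.Perm (Fin n), ∏ σ ∈ P, ∏ i, R σ π i
        = ∏ σ ∈ P, ∏ i : Fin n, ∏ π : Equiv.Perm (Fin n), R σ π i := by
      rw [Finset.prod_comm]
      refine Finset.prod_congr rfl fun σ _ => Finset.prod_comm
    rw [hswap, ← Finset.prod_pow, ]
    calc ∏ σ ∈ P, (∏ i : Fin n, ∏ π : Equiv.Perm (Fin n), R σ π i) ^ r
        = ∏ σ ∈ P, ∏ i : Fin n, (∏ π : Equiv.Perm (Fin n), R σ π i) ^ r := by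
          refine Finset.prod_congr rfl fun σ _ => (Finset.prod_pow _ _ _).symm
      _ = ∏ σ ∈ P, ∏ _i : Fin n, (r.factorial) ^ (n.factorial) := by
          refine Finset.prod_congr rfl fun σ hσ => Finset.prod_congr rfl fun i _ => hBapp σ hσ i
      _ = ((r.factorial) ^ n) ^ (Pc * n.factorial) := by
          simp only [Finset.prod_const, Finset.card_univ, Fintype.card_fin]
          rw [← pow_mul, ← pow_mul, ← pow_mul]
          congr 1
          ring
  -- final cancellation
  have hfinal : (Pc ^ r) ^ (Pc * n.factorial) ≤ ((r.factorial) ^ n) ^ (Pc * n.factorial) := by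
    rw [← hA2]
    calc (Pc ^ r) ^ (Pc * n.factorial) = ((Pc ^ Pc) ^ (n.factorial)) ^ r := by
          rw [← pow_mul, ← pow_mul, ← pow_mul]; congr 1; ring
      _ ≤ _ := Nat.pow_le_pow_left hA1 r
  have hexp : 0 < Pc * n.factorial := Nat.mul_pos hPcpos (Nat.factorial_pos n)
  exact (Nat.pow_le_pow_iff_left (Nat.pos_iff_ne_zero.mp hexp)).mp hfinal

open Finset in
lemma exists_orientation {n : ℕ} (H : SimpleGraph (Fin n)) (hconn : H.Connected)
    (hreg : ∀ v, (H.neighborSet v).ncard = 2) :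
    ∃ σ : Equiv.Perm (Fin n), (∀ v, H.Adj v (σ v)) ∧
      (∀ u v, H.Adj u v → v = σ u ∨ u = σ v) := by
  classical
  have hnbr : ∀ v : Fin n, ∃ a b : Fin n, a ≠ b ∧ H.neighborSet v = {a, b} := by
    intro v
    obtain ⟨a, b, hab, hs⟩ := Set.ncard_eq_two.mp (hreg v)
    exact ⟨a, b, hab, hs⟩
  have hkey : ∀ p c : Fin n, H.Adj p c → ∃! w, H.Adj c w ∧ w ≠ p := by
    intro p c hpc
    obtain ⟨a, b, hab, hs⟩ := hnbr c
    have hp : p ∈ H.neighborSet c := hpc.symm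
    rw [hs] at hp
    have hadj : ∀ w, H.Adj c w ↔ (w = a ∨ w = b) := by
      intro w
      constructor
      · intro hw
        have : w ∈ H.neighborSet c := hw
        rw [hs] at this
        simpa using this
      · intro hw
        have : w ∈ H.neighborSet c := by rw [hs]; simpa using hw
        exact this
    rcases hp with rfl | rfl
    · refine ⟨b, ⟨(hadj b).mpr (Or.inr rfl), hab.symm⟩, ?_⟩
      intro w ⟨hw1, hw2⟩
      rcases (hadj w).mp hw1 with rfl | rfl
      · exact absurd rfl hw2
      · rfl
    · refine ⟨a, ⟨(hadj a).mpr (Or.inl rfl), hab⟩, ?_⟩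
      intro w ⟨hw1, hw2⟩
      rcases (hadj w).mp hw1 with rfl | rfl
      · rfl
      · exact absurd rfl hw2
  -- the type of directed edges
  set E := {e : Fin n × Fin n // H.Adj e.1 e.2} with hE
  haveI : Fintype E := Subtype.fintype _
  -- "next" function
  have hnxt : ∀ e : E, ∃! w, H.Adj e.1.2 w ∧ w ≠ e.1.1 := fun e => hkey e.1.1 e.1.2 e.2
  set nxt : E → Fin n := fun e => (hnxt e).choose with hnxtdef
  have hnxt1 : ∀ e : E, H.Adj e.1.2 (nxt e) := fun e => (hnxt e).choose_spec.1.1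
  have hnxt2 : ∀ e : E, nxt e ≠ e.1.1 := fun e => (hnxt e).choose_spec.1.2
  have hnxt3 : ∀ (e : E) (w : Fin n), H.Adj e.1.2 w → w ≠ e.1.1 → w = nxt e :=
    fun e w h1 h2 => (hnxt e).choose_spec.2 w ⟨h1, h2⟩
  set f : E → E := fun e => ⟨(e.1.2, nxt e), hnxt1 e⟩ with hfdef
  have hfinj : Function.Injective f := by
    intro e e' hee
    have hc : e.1.2 = e'.1.2 := congrArg (fun x => x.1.1) hee
    have hw : nxt e = nxt e' := congrArg (fun x => x.1.2) hee
    -- show tails equal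
    obtain ⟨a, b, hab, hs⟩ := hnbr e.1.2
    have hp : e.1.1 ∈ H.neighborSet e.1.2 := e.2.symm
    have hp' : e'.1.1 ∈ H.neighborSet e.1.2 := by rw [hc]; exact e'.2.symm
    have hwmem : nxt e ∈ H.neighborSet e.1.2 := hnxt1 e
    rw [hs] at hp hp' hwmem
    simp only [Set.mem_insert_iff, Set.mem_singleton_iff] at hp hp' hwmem
    have h1 : nxt e ≠ e.1.1 := hnxt2 e
    have h2 : nxt e ≠ e'.1.1 := by rw [hw]; exact hnxt2 e'
    have htail : e.1.1 = e'.1.1 := by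
      rcases hp with h3 | h3 <;> rcases hp' with h4 | h4 <;> rcases hwmem with h5 | h5 <;> grind
    have : e.1 = e'.1 := Prod.ext htail hc
    exact Subtype.ext this
  set g : Equiv.Perm E := Equiv.ofBijective f (Finite.injective_iff_bijective.mp hfinj)
    with hgdef
  have hgapp : ∀ e : E, g e = f e := fun e => rfl
  have hghead : ∀ e : E, (g e).1.1 = e.1.2 := fun e => rfl
  have hgnxt : ∀ e : E, (g e).1.2 = nxt e := fun e => rfl
  -- reversal
  have hrinv : Function.Involutive (fun e : E => (⟨(e.1.2, e.1.1), e.2.symm⟩ : E)) := by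
    intro e; rfl
  set ρ : Equiv.Perm E := hrinv.toPerm _ with hρdef
  have hρapp : ∀ e : E, (ρ e).1.1 = e.1.2 ∧ (ρ e).1.2 = e.1.1 := fun e => ⟨rfl, rfl⟩
  have hρρ : ρ * ρ = 1 := Equiv.ext fun e => hrinv e
  have hρinv : ρ⁻¹ = ρ := inv_eq_of_mul_eq_one_right hρρ
  -- conjugation identity
  have hfix : ∀ e : E, g (ρ (g (ρ e))) = e := by
    intro e
    set e1 := ρ e with he1
    set e2 := g e1 with he2
    set e3 := ρ e2 with he3
    -- e = (p, c);  e1 = (c, p);  e2 = (p, q) with q = nxt e1;  e3 = (q, p)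
    have h21 : e2.1.1 = e.1.1 := hghead e1
    have h31 : e3.1.1 = nxt e1 := rfl
    have h32 : e3.1.2 = e.1.1 := h21
    -- g e3 = (p, nxt e3) and nxt e3 = c
    apply Subtype.ext
    apply Prod.ext
    · show (g e3).1.1 = e.1.1
      rw [hghead e3, h32]
    · show (g e3).1.2 = e.1.2
      rw [hgnxt e3]
      have hadj : H.Adj e3.1.2 e.1.2 := by rw [h32]; exact e.2
      have hne : e.1.2 ≠ e3.1.1 := by
        rw [h31]
        exact (Ne.symm (hnxt2 e1))
      exact (hnxt3 e3 e.1.2 hadj hne).symm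
  have hconj : g⁻¹ = ρ * g * ρ := inv_eq_of_mul_eq_one_right (Equiv.ext fun e => hfix e)
  have hconjk : ∀ k : ℤ, ρ * g ^ k * ρ = g ^ (-k) := by
    intro k
    have h1 : (ρ * g * ρ⁻¹) ^ k = ρ * g ^ k * ρ⁻¹ := conj_zpow
    rw [hρinv] at h1
    rw [← h1, ← hconj, inv_zpow, zpow_neg]
  have hρρ' : ∀ x : E, ρ (ρ x) = x := fun x => hrinv x
  have hconjk' : ∀ (k : ℤ) (x : E), ρ ((g ^ k) x) = (g ^ (-k)) (ρ x) := by
    intro k x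
    have h := congrArg (fun τ : Equiv.Perm E => τ (ρ x)) (hconjk k)
    simp only [Equiv.Perm.mul_apply] at h
    rw [hρρ' x] at h
    exact h
  have hcomp : ∀ (a b : ℤ) (x : E), (g ^ a) ((g ^ b) x) = (g ^ (a + b)) x := by
    intro a b x
    rw [zpow_add, Equiv.Perm.mul_apply]
  -- base directed edge and orbit
  obtain ⟨v₀⟩ := hconn.nonempty
  have hv0 : (H.neighborSet v₀).Nonempty := by
    apply Set.nonempty_of_ncard_ne_zero; rw [hreg v₀]; omega
  obtain ⟨v₁, hv₁⟩ := hv0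
  set e₀ : E := ⟨(v₀, v₁), hv₁⟩ with he₀
  set O : Finset E := Finset.univ.filter (fun e => ∃ k : ℤ, (g ^ k) e₀ = e) with hO
  have hOmem : ∀ e : E, e ∈ O ↔ ∃ k : ℤ, (g ^ k) e₀ = e := by
    intro e; simp [hO]
  have he₀O : e₀ ∈ O := (hOmem e₀).mpr ⟨0, rfl⟩
  have hOg : ∀ e ∈ O, g e ∈ O := by
    intro e he
    obtain ⟨k, hk⟩ := (hOmem e).mp he
    refine (hOmem _).mpr ⟨1 + k, ?_⟩
    rw [zpow_add, Equiv.Perm.mul_apply, hk, zpow_one]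
  have hOginv : ∀ e ∈ O, g⁻¹ e ∈ O := by
    intro e he
    obtain ⟨k, hk⟩ := (hOmem e).mp he
    refine (hOmem _).mpr ⟨-1 + k, ?_⟩
    rw [zpow_add, Equiv.Perm.mul_apply, hk]
    rfl
  -- the orbit never contains a reversed edge
  have claim2 : ∀ e ∈ O, ρ e ∉ O := by
    intro e he hre
    obtain ⟨s, hs⟩ := (hOmem e).mp he
    obtain ⟨t, ht⟩ := (hOmem (ρ e)).mp hre
    have hρe₀ : ρ e₀ = (g ^ (s + t)) e₀ := by
      have h1 : ρ e = (g ^ (-s)) (ρ e₀) := by rw [← hs, hconjk' s e₀]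
      have h2 : (g ^ s) (ρ e) = ρ e₀ := by
        rw [h1, hcomp]
        simp
      rw [← h2, ← ht, hcomp]
    rcases Int.even_or_odd (s + t) with ⟨j, hj⟩ | ⟨j, hj⟩
    · -- even case : ρ-fixed edge
      have hfixρ : ρ ((g ^ j) e₀) = (g ^ j) e₀ := by
        rw [hconjk' j e₀, hρe₀, hcomp, hj]
        congr 1
        ring_nf
      have h1 : ((g ^ j) e₀).1.2 = ((g ^ j) e₀).1.1 := by
        have := congrArg (fun x : E => x.1.1) hfixρ
        exact this
      exact H.loopless.irrefl _ (h1 ▸ ((g ^ j) e₀).2)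
    · -- odd case : ρ e' = g e'
      have hstep : ρ ((g ^ j) e₀) = g ((g ^ j) e₀) := by
        rw [hconjk' j e₀, hρe₀, hcomp, hj]
        have : -j + (2 * j + 1) = 1 + j := by ring
        rw [this, ← hcomp 1 j, zpow_one]
      have h1 : ((g ^ j) e₀).1.1 = nxt ((g ^ j) e₀) := by
        have := congrArg (fun x : E => x.1.2) hstep
        exact this
      exact hnxt2 ((g ^ j) e₀) h1.symm
  -- in / out edge sets
  set inE : Fin n → Finset E := fun v => O.filter (fun e => e.1.2 = v) with hinE
  set outE : Fin n → Finset E := fun v => O.filter (fun e => e.1.1 = v) with houtE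
  have hio : ∀ v, (inE v).card = (outE v).card := by
    intro v
    apply Finset.card_nbij' (fun e => g e) (fun e => g⁻¹ e)
    · intro e he
      rw [Finset.mem_coe, Finset.mem_filter] at he ⊢
      exact ⟨hOg e he.1, he.2⟩
    · intro e he
      rw [Finset.mem_coe, Finset.mem_filter] at he ⊢
      refine ⟨hOginv e he.1, ?_⟩
      have h1 : (g (g⁻¹ e)).1.1 = (g⁻¹ e).1.2 := hghead _
      rw [show g (g⁻¹ e) = e from Equiv.apply_symm_apply g e] at h1
      rw [← h1, he.2]
    · intro e _; exact Equiv.symm_apply_apply g e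
    · intro e _; exact Equiv.apply_symm_apply g e
  -- heads propagate along adjacency
  have hSne : ∀ v u, (inE v).Nonempty → H.Adj v u → (inE u).Nonempty := by
    intro v u hne hadj
    obtain ⟨e, he⟩ := hne
    rw [Finset.mem_filter] at he
    obtain ⟨heO, hev⟩ := he
    have hcases : u = e.1.1 ∨ u = nxt e := by
      obtain ⟨a, b, hab, hs⟩ := hnbr v
      have h1 : e.1.1 ∈ H.neighborSet v := by rw [← hev]; exact e.2.symm
      have h2 : nxt e ∈ H.neighborSet v := by rw [← hev]; exact hnxt1 e
      have h3 : u ∈ H.neighborSet v := hadj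
      rw [hs] at h1 h2 h3
      simp only [Set.mem_insert_iff, Set.mem_singleton_iff] at h1 h2 h3
      have h4 : nxt e ≠ e.1.1 := hnxt2 e
      rcases h3 with h3 | h3
      · rcases h1 with h1 | h1
        · left; rw [h3, h1]
        · rcases h2 with h2 | h2
          · right; rw [h3, h2]
          · exact absurd (h2.trans h1.symm) h4
      · rcases h1 with h1 | h1
        · rcases h2 with h2 | h2
          · exact absurd (h2.trans h1.symm) h4
          · right; rw [h3, h2]
        · left; rw [h3, h1]
    rcases hcases with hu | hu
    · refine ⟨g⁻¹ e, ?_⟩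
      rw [Finset.mem_filter]
      refine ⟨hOginv e heO, ?_⟩
      have h1 : (g (g⁻¹ e)).1.1 = (g⁻¹ e).1.2 := hghead _
      rw [show g (g⁻¹ e) = e from Equiv.apply_symm_apply g e] at h1
      rw [← h1, hu]
    · refine ⟨g e, ?_⟩
      rw [Finset.mem_filter]
      exact ⟨hOg e heO, by rw [hgnxt e, hu]⟩
  have hv₁in : (inE v₁).Nonempty := ⟨e₀, by rw [Finset.mem_filter]; exact ⟨he₀O, rfl⟩⟩
  have hall : ∀ u, (inE u).Nonempty := by
    have hwalk : ∀ (a b : Fin n) (w : H.Walk a b), (inE a).Nonempty → (inE b).Nonempty := by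
      intro a b w
      induction w with
      | nil => exact id
      | cons h p ih => intro ha; exact ih (hSne _ _ ha h)
    intro u
    obtain ⟨w⟩ := hconn.preconnected v₁ u
    exact hwalk v₁ u w hv₁in
  -- total out-degree 2
  have hallE : ∀ v, (Finset.univ.filter (fun e : E => e.1.1 = v)).card = 2 := by
    intro v
    rw [← hreg v, Set.ncard_eq_toFinset_card']
    apply Finset.card_bij (fun e (_ : e ∈ Finset.univ.filter (fun e : E => e.1.1 = v)) => e.1.2)
    · intro e he
      rw [Finset.mem_filter] at he
      rw [Set.mem_toFinset]
      have h2 := e.2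
      rw [he.2] at h2
      exact h2
    · intro e he e' he' h
      rw [Finset.mem_filter] at he he'
      apply Subtype.ext
      apply Prod.ext
      · rw [he.2, he'.2]
      · exact h
    · intro w hw
      have hadj : H.Adj v w := Set.mem_toFinset.mp hw
      exact ⟨⟨(v, w), hadj⟩, Finset.mem_filter.mpr ⟨Finset.mem_univ _, rfl⟩, rfl⟩
    -- union structure and degree counts
  have hkey2 : ∀ v, (outE v ∪ (inE v).image ρ) = Finset.univ.filter (fun e : E => e.1.1 = v)
      ∧ (outE v).card = 1 ∧ (inE v).card = 1 := by
    intro v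
    have hsub : outE v ∪ (inE v).image ρ ⊆ Finset.univ.filter (fun e : E => e.1.1 = v) := by
      intro e he
      rcases Finset.mem_union.mp he with he | he
      · rw [Finset.mem_filter] at he
        exact Finset.mem_filter.mpr ⟨Finset.mem_univ _, he.2⟩
      · obtain ⟨e', he', rfl⟩ := Finset.mem_image.mp he
        rw [Finset.mem_filter] at he'
        exact Finset.mem_filter.mpr ⟨Finset.mem_univ _, he'.2⟩
    have hdisj : Disjoint (outE v) ((inE v).image ρ) := by
      rw [Finset.disjoint_right]
      intro e he hout
      obtain ⟨e', he', rfl⟩ := Finset.mem_image.mp he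
      rw [Finset.mem_filter] at he' hout
      exact claim2 e' he'.1 hout.1
    have h1 := Finset.card_le_card hsub
    rw [Finset.card_union_of_disjoint hdisj,
      Finset.card_image_of_injective _ ρ.injective, hallE v] at h1
    have h2 : 1 ≤ (inE v).card := Finset.card_pos.mpr (hall v)
    have h3 := hio v
    have hc1 : (outE v).card = 1 := by omega
    have hc2 : (inE v).card = 1 := by omega
    refine ⟨Finset.eq_of_subset_of_card_le hsub ?_, hc1, hc2⟩
    rw [hallE v, Finset.card_union_of_disjoint hdisj,
      Finset.card_image_of_injective _ ρ.injective, hc1, hc2]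
  -- construct the successor function
  have hout1 : ∀ v, ∃ e : E, outE v = {e} := fun v => Finset.card_eq_one.mp (hkey2 v).2.1
  set σf : Fin n → Fin n := fun v => ((hout1 v).choose).1.2 with hσf
  have hchosen : ∀ v, (hout1 v).choose ∈ O ∧ ((hout1 v).choose).1.1 = v := by
    intro v
    have h1 : (hout1 v).choose ∈ ({(hout1 v).choose} : Finset E) :=
      Finset.mem_singleton_self _
    rw [← (hout1 v).choose_spec] at h1
    rw [Finset.mem_filter] at h1
    exact h1
  have hOout : ∀ e ∈ O, e = (hout1 e.1.1).choose := by
    intro e he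
    have h1 : e ∈ outE e.1.1 := Finset.mem_filter.mpr ⟨he, rfl⟩
    rw [(hout1 e.1.1).choose_spec] at h1
    exact Finset.mem_singleton.mp h1
  have hσadj : ∀ v, H.Adj v (σf v) := by
    intro v
    have h := (hchosen v).2
    have h2 := ((hout1 v).choose).2
    rw [h] at h2
    exact h2
  have hσinj : Function.Injective σf := by
    intro v v' h
    have he : (hout1 v).choose ∈ inE (σf v) :=
      Finset.mem_filter.mpr ⟨(hchosen v).1, rfl⟩
    have he' : (hout1 v').choose ∈ inE (σf v) := by
      refine Finset.mem_filter.mpr ⟨(hchosen v').1, ?_⟩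
      show σf v' = σf v
      rw [h]
    have heq : (hout1 v).choose = (hout1 v').choose := by
      obtain ⟨x, hx⟩ := Finset.card_eq_one.mp (hkey2 (σf v)).2.2
      rw [hx] at he he'
      rw [Finset.mem_singleton.mp he, Finset.mem_singleton.mp he']
    rw [← (hchosen v).2, ← (hchosen v').2, heq]
  have hcover : ∀ e : E, e ∈ O ∨ ρ e ∈ O := by
    intro e
    have h := (hkey2 e.1.1).1
    have he : e ∈ Finset.univ.filter (fun x : E => x.1.1 = e.1.1) :=
      Finset.mem_filter.mpr ⟨Finset.mem_univ _, rfl⟩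
    rw [← h] at he
    rcases Finset.mem_union.mp he with h1 | h1
    · exact Or.inl (Finset.mem_filter.mp h1).1
    · obtain ⟨e', he', heq⟩ := Finset.mem_image.mp h1
      right
      have h2 : ρ e = e' := by rw [← heq, hρρ' e']
      rw [h2]
      exact (Finset.mem_filter.mp he').1
  have hrec : ∀ u v, H.Adj u v → v = σf u ∨ u = σf v := by
    intro u v hadj
    rcases hcover ⟨(u, v), hadj⟩ with h | h
    · left
      have h2 := hOout _ h
      exact congrArg (fun x : E => x.1.2) h2
    · right
      have h2 := hOout _ h
      exact congrArg (fun x : E => x.1.2) h2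
  exact ⟨Equiv.ofBijective σf (Finite.injective_iff_bijective.mp hσinj), hσadj, hrec⟩

/-- Brégman bound. Every `r`-regular graph on `n` vertices
(`r ≥ 1`) contains at most `(r!)^(n/r)` Hamilton cycles. -/
theorem bregman_hamilton_cycle_bound (n r : ℕ) (hr : 1 ≤ r)
    (Γ : SimpleGraph (Fin n)) (hreg : IsRegN Γ r) :
    (({H : SimpleGraph (Fin n) | H ≤ Γ ∧ IsHamCycleGraph H}).ncard : ℝ) ≤
      ((r.factorial : ℝ)) ^ ((n : ℝ) / (r : ℝ)) := by

  classical
  set N : Fin n → Finset (Fin n) := fun v => (Γ.neighborSet v).toFinset with hNdef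
  have hN : ∀ v, (N v).card = r := by
    intro v
    rw [hNdef]
    rw [← Set.ncard_eq_toFinset_card']
    exact hreg v
  set S : Set (SimpleGraph (Fin n)) := {H | H ≤ Γ ∧ IsHamCycleGraph H} with hSdef
  set T : Finset (Equiv.Perm (Fin n)) :=
    Finset.univ.filter (fun σ : Equiv.Perm (Fin n) => ∀ v, σ v ∈ N v) with hTdef
  -- degree-2 unfolding
  have hdeg2 : ∀ H ∈ S, ∀ v, (SimpleGraph.neighborSet H v).ncard = 2 := by
    intro H hH v
    exact hH.2.2 v
  -- choice of orientation
  have horient : ∀ H ∈ S, ∃ σ : Equiv.Perm (Fin n), (∀ v, H.Adj v (σ v)) ∧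
      (∀ u v, H.Adj u v → v = σ u ∨ u = σ v) :=
    fun H hH => exists_orientation H hH.2.1 (hdeg2 H hH)
  set F : SimpleGraph (Fin n) → Equiv.Perm (Fin n) :=
    fun H => if h : H ∈ S then (horient H h).choose else 1 with hFdef
  have hF1 : ∀ H (h : H ∈ S), ∀ v, H.Adj v (F H v) := by
    intro H h v
    rw [hFdef]
    simp only [dif_pos h]
    exact (horient H h).choose_spec.1 v
  have hF2 : ∀ H (h : H ∈ S), ∀ u v, H.Adj u v → v = F H u ∨ u = F H v := by
    intro H h u v huv
    rw [hFdef]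
    simp only [dif_pos h]
    exact (horient H h).choose_spec.2 u v huv
  have hadj_iff : ∀ H (h : H ∈ S), ∀ u v, H.Adj u v ↔ (v = F H u ∨ u = F H v) := by
    intro H h u v
    constructor
    · exact hF2 H h u v
    · rintro (rfl | rfl)
      · exact hF1 H h u
      · exact (hF1 H h v).symm
  have hmaps : ∀ H ∈ S, F H ∈ (T : Set (Equiv.Perm (Fin n))) := by
    intro H hH
    rw [hTdef]
    simp only [Finset.coe_filter, Set.mem_setOf_eq, Finset.mem_univ, true_and]
    intro v
    rw [hNdef, Set.mem_toFinset]
    exact hH.1 (hF1 H hH v)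
  have hinj : Set.InjOn F S := by
    intro H hH H' hH' h
    ext u v
    rw [hadj_iff H hH u v, hadj_iff H' hH' u v, h]
  have hcount : S.ncard ≤ T.card := by
    have := Set.ncard_le_ncard_of_injOn F hmaps hinj (T.finite_toSet)
    rwa [Set.ncard_coe_finset] at this
  have hcore := bregman_core hr N hN
  -- real computation
  have hrpos : (0:ℝ) < (r:ℝ) := by exact_mod_cast hr
  have hC : (S.ncard : ℝ) ^ (r:ℕ) ≤ ((r.factorial : ℝ)) ^ (n:ℕ) := by
    calc (S.ncard : ℝ) ^ (r:ℕ) ≤ (T.card : ℝ) ^ (r:ℕ) := by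
          apply pow_le_pow_left₀ (by positivity)
          exact_mod_cast hcount
      _ ≤ ((r.factorial : ℝ)) ^ (n:ℕ) := by exact_mod_cast hcore
  have h0 : (0:ℝ) ≤ (S.ncard : ℝ) := by positivity
  have hfact0 : (0:ℝ) ≤ (r.factorial : ℝ) := by positivity
  calc (S.ncard : ℝ)
      = (((S.ncard : ℝ) ^ (r:ℕ)) : ℝ) ^ ((1:ℝ)/(r:ℝ)) := by
        rw [← Real.rpow_natCast (S.ncard : ℝ) r, ← Real.rpow_mul h0]
        rw [mul_one_div, div_self (ne_of_gt hrpos), Real.rpow_one]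
    _ ≤ (((r.factorial : ℝ)) ^ (n:ℕ)) ^ ((1:ℝ)/(r:ℝ)) := by
        apply Real.rpow_le_rpow (by positivity) hC (by positivity)
    _ = ((r.factorial : ℝ)) ^ ((n : ℝ) / (r : ℝ)) := by
        rw [← Real.rpow_natCast (r.factorial : ℝ) n, ← Real.rpow_mul hfact0]
        rw [mul_one_div]
end

section
/- Let ε₀, γ₀ > 0 be constants with c₀ ≥ ε₀, let d = ⌈(c₀ - ε₀)n/2⌉, and let n be sufficiently large. Let D be a directed graph on n vertices such that every vertex has in-degree and out-degree between c₀n/2 - n^{2/3} and c₀n/2 + n^{2/3}, and such that for every two vertex subsets A, B with |A| ≥ c₀n/3 and |B| ≥ n/2 there are at least γ₀n²/3 directed edges from A to B and at least γ₀n²/3 directed edges from B to A. Then D contains a spanning subdigraph in which every vertex has in-degree and out-degree exactly d. -/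
/-- The out-degree of a vertex of a digraph. -/
noncomputable def outDeg {V : Type*} (D : Digraph V) (v : V) : ℕ :=
  {w | D.Adj v w}.ncard

/-- The in-degree of a vertex of a digraph. -/
noncomputable def inDeg {V : Type*} (D : Digraph V) (v : V) : ℕ :=
  {w | D.Adj w v}.ncard

/-- The number of directed edges of `D` with tail in `A` and head in `B`. -/
noncomputable def dEdges {V : Type*} (D : Digraph V) (A B : Set V) : ℕ :=
  {p : V × V | D.Adj p.1 p.2 ∧ p.1 ∈ A ∧ p.2 ∈ B}.ncard

open Finset

namespace RSS
variable {n : ℕ}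

noncomputable def outF (G : Finset (Fin n × Fin n)) (x : Fin n) : ℕ :=
  (Finset.univ.filter fun w => (x, w) ∈ G).card

noncomputable def inF (G : Finset (Fin n × Fin n)) (y : Fin n) : ℕ :=
  (Finset.univ.filter fun w => (w, y) ∈ G).card

noncomputable def cnt (G : Finset (Fin n × Fin n)) (S T : Finset (Fin n)) : ℕ :=
  (G.filter fun p => p.1 ∈ S ∧ p.2 ∈ T).card

lemma sum_outF (G : Finset (Fin n × Fin n)) (S : Finset (Fin n)) :
    ∑ x ∈ S, outF G x = cnt G S univ := by
  have h1 : cnt G S univ = (G.filter fun p => p.1 ∈ S).card := by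
    unfold cnt; congr 1; apply filter_congr; intro p _; simp
  rw [h1, Finset.card_eq_sum_card_fiberwise (f := Prod.fst) (s := G.filter fun p => p.1 ∈ S) (t := S)
    (fun p hp => (mem_filter.1 hp).2)]
  apply Finset.sum_congr rfl
  intro x hx
  unfold outF
  apply Finset.card_nbij' (i := fun w => (x, w)) (j := Prod.snd)
  · intro w hw
    simp only [Finset.mem_coe, mem_filter, mem_univ, true_and] at hw ⊢
    exact ⟨⟨hw, hx⟩, trivial⟩
  · intro p hp
    simp only [Finset.mem_coe, mem_filter, mem_univ, true_and] at hp ⊢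
    obtain ⟨⟨hpG, _⟩, hpx⟩ := hp
    rwa [show ((x, p.2) : Fin n × Fin n) = p from Prod.ext hpx.symm rfl]
  · intro w _; rfl
  · intro p hp
    simp only [Finset.mem_coe, mem_filter] at hp
    exact Prod.ext (by simp [hp.2]) rfl


lemma sum_inF (G : Finset (Fin n × Fin n)) (T : Finset (Fin n)) :
    ∑ y ∈ T, inF G y = cnt G univ T := by
  have h1 : cnt G univ T = (G.filter fun p => p.2 ∈ T).card := by
    unfold cnt; congr 1; apply filter_congr; intro p _; simp
  rw [h1, Finset.card_eq_sum_card_fiberwise (f := Prod.snd) (s := G.filter fun p => p.2 ∈ T) (t := T)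
    (fun p hp => (mem_filter.1 hp).2)]
  apply Finset.sum_congr rfl
  intro y hy
  unfold inF
  apply Finset.card_nbij' (i := fun w => (w, y)) (j := Prod.fst)
  · intro w hw
    simp only [Finset.mem_coe, mem_filter, mem_univ, true_and] at hw ⊢
    exact ⟨⟨hw, hy⟩, trivial⟩
  · intro p hp
    simp only [Finset.mem_coe, mem_filter, mem_univ, true_and] at hp ⊢
    obtain ⟨⟨hpG, _⟩, hpy⟩ := hp
    rwa [show ((p.1, y) : Fin n × Fin n) = p from Prod.ext rfl hpy.symm]
  · intro w _; rfl
  · intro p hp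
    simp only [Finset.mem_coe, mem_filter] at hp
    exact Prod.ext rfl (by simp [hp.2])

lemma card_eq_cnt (G : Finset (Fin n × Fin n)) : cnt G univ univ = G.card := by
  unfold cnt; rw [filter_true_of_mem]; intro p _; simp

lemma cnt_split (G : Finset (Fin n × Fin n)) (S T : Finset (Fin n)) :
    cnt G S univ = cnt G S T + cnt G S (univ \ T) := by
  unfold cnt
  rw [← Finset.card_union_of_disjoint, ← Finset.filter_or]
  · apply Finset.card_nbij' (i := id) (j := id) <;> intro p hp <;>
      simp only [Finset.mem_coe, mem_filter, mem_univ, mem_sdiff, true_and, id] at hp ⊢ <;> tauto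
  · rw [Finset.disjoint_filter]
    intro p _ hp hp2
    exact (mem_sdiff.1 hp2.2).2 hp.2

lemma cnt_mono (G G' : Finset (Fin n × Fin n)) (h : G ⊆ G') (S T : Finset (Fin n)) :
    cnt G S T ≤ cnt G' S T :=
  Finset.card_le_card (fun p hp => by
    simp only [mem_filter] at hp ⊢; exact ⟨h hp.1, hp.2⟩)

lemma cnt_le_mul (G : Finset (Fin n × Fin n)) (S T : Finset (Fin n)) :
    cnt G S T ≤ S.card * T.card := by
  rw [← Finset.card_product]
  apply Finset.card_le_card
  intro p hp
  simp only [mem_filter] at hp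
  simp [Finset.mem_product, hp.2.1, hp.2.2]


def WalkOK (d : ℕ) (E F : Finset (Fin n × Fin n)) : Fin n → List (Fin n × Fin n) → Prop
  | x, [] => outF F x < d
  | x, (y, x') :: l => (x', y) ∈ E ∧ (x', y) ∉ F ∧ (x, y) ∈ F ∧ WalkOK d E F x' l

lemma walk_shortcut (d : ℕ) (E F : Finset (Fin n × Fin n)) :
    ∀ (l : List (Fin n × Fin n)) (x0 x : Fin n), WalkOK d E F x0 l →
      x ∈ l.map Prod.snd → ∃ l', l'.length < l.length ∧ WalkOK d E F x l' := by
  intro l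
  induction l with
  | nil => intro x0 x _ hx; simp at hx
  | cons p l ih =>
    obtain ⟨y, x'⟩ := p
    intro x0 x hw hx
    obtain ⟨_, _, _, hw'⟩ := hw
    rcases List.mem_cons.1 hx with h | h
    · simp only at h
      exact ⟨l, by simp, h ▸ hw'⟩
    · obtain ⟨l', hl', hwl'⟩ := ih x' x hw' h
      exact ⟨l', by simpa using Nat.lt_succ_of_lt hl', hwl'⟩


section Flip
set_option linter.unusedSectionVars false
variable {F : Finset (Fin n × Fin n)} {x y y₁ : Fin n}
  (hxy : (x, y) ∉ F) (hxy1 : (x, y₁) ∈ F)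

lemma flip_mem (a b : Fin n) :
    (a, b) ∈ insert (x, y) (F.erase (x, y₁)) ↔
      ((a = x ∧ b = y) ∨ ((a, b) ∈ F ∧ ¬(a = x ∧ b = y₁))) := by
  simp only [Finset.mem_insert, Finset.mem_erase, Prod.mk.injEq, Ne, Prod.ext_iff]
  tauto

include hxy hxy1

lemma flip_ne : y ≠ y₁ := by rintro rfl; exact hxy hxy1

lemma flip_mem_of_ne (a b : Fin n) (ha : a ≠ x) :
    ((a, b) ∈ insert (x, y) (F.erase (x, y₁)) ↔ (a, b) ∈ F) := by
  rw [flip_mem]; tauto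

lemma flip_outF (z : Fin n) : outF (insert (x, y) (F.erase (x, y₁))) z = outF F z := by
  by_cases hz : z = x
  · subst hz
    unfold outF
    have hset : (univ.filter fun w => (z, w) ∈ insert (z, y) (F.erase (z, y₁))) =
        insert y ((univ.filter fun w => (z, w) ∈ F).erase y₁) := by
      ext w
      simp only [mem_filter, mem_univ, true_and]
      rw [flip_mem]
      simp only [mem_insert, mem_erase, mem_filter, mem_univ, true_and,
        eq_self_iff_true, true_and, Ne]
      tauto
    rw [hset]
    have hy1 : y₁ ∈ (univ.filter fun w => (z, w) ∈ F) := by simp [hxy1]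
    rw [Finset.card_insert_of_notMem (by simp [Finset.mem_erase, hxy]),
      Finset.card_erase_of_mem hy1]
    have : 1 ≤ (univ.filter fun w => (z, w) ∈ F).card := Finset.card_pos.2 ⟨y₁, hy1⟩
    omega
  · unfold outF
    congr 1
    apply filter_congr
    intro w _
    exact flip_mem_of_ne hxy hxy1 z w hz

lemma flip_inF_y : inF (insert (x, y) (F.erase (x, y₁))) y = inF F y + 1 := by
  have hne := flip_ne hxy hxy1
  unfold inF
  have hset : (univ.filter fun w => (w, y) ∈ insert (x, y) (F.erase (x, y₁))) =
      insert x (univ.filter fun w => (w, y) ∈ F) := by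
    ext w
    simp only [mem_filter, mem_univ, true_and]
    rw [flip_mem]
    simp only [mem_insert, mem_filter, mem_univ, true_and, eq_self_iff_true, and_true]
    tauto
  rw [hset, Finset.card_insert_of_notMem (by simp [hxy])]

lemma flip_inF_y1 : inF (insert (x, y) (F.erase (x, y₁))) y₁ + 1 = inF F y₁ := by
  have hne := flip_ne hxy hxy1
  have hne' : y₁ ≠ y := hne.symm
  unfold inF
  have hset : (univ.filter fun w => (w, y₁) ∈ insert (x, y) (F.erase (x, y₁))) =
      (univ.filter fun w => (w, y₁) ∈ F).erase x := by
    ext w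
    simp only [mem_filter, mem_univ, true_and]
    rw [flip_mem]
    simp only [mem_erase, mem_filter, mem_univ, true_and, eq_self_iff_true, and_true, Ne]
    tauto
  rw [hset, Finset.card_erase_of_mem (by simp [hxy1])]
  have : 1 ≤ (univ.filter fun w => (w, y₁) ∈ F).card :=
    Finset.card_pos.2 ⟨x, by simp [hxy1]⟩
  omega

lemma flip_inF_other (z : Fin n) (hzy : z ≠ y) (hzy1 : z ≠ y₁) :
    inF (insert (x, y) (F.erase (x, y₁))) z = inF F z := by
  unfold inF
  congr 1
  apply filter_congr
  intro w _
  rw [flip_mem]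
  tauto

lemma flip_card : (insert (x, y) (F.erase (x, y₁))).card = F.card := by
  rw [Finset.card_insert_of_notMem (fun hc => hxy (Finset.mem_of_mem_erase hc)),
    Finset.card_erase_of_mem hxy1]
  have : 1 ≤ F.card := Finset.card_pos.2 ⟨_, hxy1⟩
  omega

end Flip


lemma walk_preserve (d : ℕ) (E F : Finset (Fin n × Fin n)) {x y y₁ : Fin n}
    (hxy : (x, y) ∉ F) (hxy1 : (x, y₁) ∈ F) :
    ∀ (l : List (Fin n × Fin n)) (x₁ : Fin n), WalkOK d E F x₁ l → x₁ ≠ x →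
      x ∉ l.map Prod.snd → WalkOK d E (insert (x, y) (F.erase (x, y₁))) x₁ l := by
  intro l
  induction l with
  | nil =>
    intro x₁ hw _ _
    unfold WalkOK at hw ⊢
    rwa [flip_outF hxy hxy1]
  | cons p l ih =>
    obtain ⟨y₂, x₂⟩ := p
    intro x₁ hw hx1 hxl
    obtain ⟨hE, hnF, hF, hw'⟩ := hw
    have hx2 : x₂ ≠ x := by
      intro hc
      exact hxl (by simp [← hc])
    have hxl' : x ∉ l.map Prod.snd := fun hc => hxl (by simp [hc])
    exact ⟨hE, fun hc => hnF ((flip_mem_of_ne hxy hxy1 _ _ hx2).1 hc),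
      (flip_mem_of_ne hxy hxy1 _ _ hx1).2 hF, ih x₂ hw' hx2 hxl'⟩

/-- A walk ending at `x` with a usable non-`F` edge `(x, y)` into a deficient head `y`
can be augmented. -/
lemma aug (d : ℕ) (E : Finset (Fin n × Fin n)) :
    ∀ (N : ℕ) (l : List (Fin n × Fin n)), l.length ≤ N →
    ∀ (F : Finset (Fin n × Fin n)) (x y : Fin n),
      F ⊆ E → (∀ z, outF F z ≤ d) → (∀ z, inF F z ≤ d) →
      WalkOK d E F x l → (x, y) ∈ E → (x, y) ∉ F → inF F y < d →
      ∃ F' : Finset (Fin n × Fin n), F' ⊆ E ∧ (∀ z, outF F' z ≤ d) ∧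
        (∀ z, inF F' z ≤ d) ∧ F'.card = F.card + 1 := by
  intro N
  induction N with
  | zero =>
    intro l hl F x y hFE hout hin hw hE hnF hy
    rw [Nat.le_zero, List.length_eq_zero_iff] at hl
    subst hl
    refine ⟨insert (x, y) F, ?_, ?_, ?_, Finset.card_insert_of_notMem hnF⟩
    · exact Finset.insert_subset hE hFE
    · intro z
      unfold outF
      by_cases hz : z = x
      · subst hz
        have : (univ.filter fun w => (z, w) ∈ insert (z, y) F) =
            insert y (univ.filter fun w => (z, w) ∈ F) := by
          ext w; simp [Finset.mem_insert]
        rw [this, Finset.card_insert_of_notMem (by simp [hnF])]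
        exact hw
      · have : (univ.filter fun w => (z, w) ∈ insert (x, y) F) =
            (univ.filter fun w => (z, w) ∈ F) := by
          ext w
          simp only [mem_filter, mem_univ, true_and, Finset.mem_insert, Prod.mk.injEq]
          tauto
        rw [this]; exact hout z
    · intro z
      unfold inF
      by_cases hz : z = y
      · subst hz
        have : (univ.filter fun w => (w, z) ∈ insert (x, z) F) =
            insert x (univ.filter fun w => (w, z) ∈ F) := by
          ext w; simp [Finset.mem_insert]
        rw [this, Finset.card_insert_of_notMem (by simp [hnF])]
        exact hy
      · have : (univ.filter fun w => (w, z) ∈ insert (x, y) F) =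
            (univ.filter fun w => (w, z) ∈ F) := by
          ext w
          simp only [mem_filter, mem_univ, true_and, Finset.mem_insert, Prod.mk.injEq]
          tauto
        rw [this]; exact hin z
  | succ N ih =>
    intro l hl F x y hFE hout hin hw hE hnF hy
    match l with
    | [] => exact ih [] (by simp) F x y hFE hout hin hw hE hnF hy
    | (y₁, x₁) :: l' =>
      obtain ⟨hE1, hnF1, hF1, hw'⟩ := hw
      by_cases hx : x ∈ x₁ :: l'.map Prod.snd
      · obtain ⟨l'', hlen, hw''⟩ :=
          walk_shortcut d E F ((y₁, x₁) :: l') x x ⟨hE1, hnF1, hF1, hw'⟩ (by simpa using hx)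
        have hlen' : l''.length ≤ N := by
          simp only [List.length_cons] at hlen hl
          omega
        exact ih l'' hlen' F x y hFE hout hin hw'' hE hnF hy
      · -- flip the last two edges
        have hx1 : x₁ ≠ x := fun hc => hx (by simp [hc])
        have hxl' : x ∉ l'.map Prod.snd := fun hc => hx (by simp [hc])
        set F₂ := insert (x, y) (F.erase (x, y₁)) with hF₂
        have hne : y ≠ y₁ := flip_ne hnF hF1
        have h1y1 : 1 ≤ inF F y₁ := by
          unfold inF
          exact Finset.card_pos.2 ⟨x, by simp [hF1]⟩
        have hF₂E : F₂ ⊆ E :=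
          Finset.insert_subset hE ((Finset.erase_subset _ _).trans hFE)
        have hout₂ : ∀ z, outF F₂ z ≤ d := fun z => (flip_outF hnF hF1 z) ▸ hout z
        have hiny1 : inF F₂ y₁ + 1 = inF F y₁ := flip_inF_y1 hnF hF1
        have hin₂ : ∀ z, inF F₂ z ≤ d := by
          intro z
          by_cases hzy : z = y
          · subst hzy; rw [flip_inF_y hnF hF1]; omega
          · by_cases hzy1 : z = y₁
            · have h := hin y₁
              rw [hzy1]
              omega
            · rw [flip_inF_other hnF hF1 z hzy hzy1]; exact hin z
        have hw₂ : WalkOK d E F₂ x₁ l' := walk_preserve d E F hnF hF1 l' x₁ hw' hx1 hxl'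
        have hnF₂1 : (x₁, y₁) ∉ F₂ := fun hc =>
          hnF1 ((flip_mem_of_ne hnF hF1 _ _ hx1).1 hc)
        have hy₂ : inF F₂ y₁ < d := by
          have := hin y₁
          omega
        have hlN : l'.length ≤ N := by
          simp only [List.length_cons] at hl
          omega
        obtain ⟨F', h1, h2, h3, h4⟩ :=
          ih l' hlN F₂ x₁ y₁ hF₂E hout₂ hin₂ hw₂ hE1 hnF₂1 hy₂
        refine ⟨F', h1, h2, h3, ?_⟩
        rw [h4, flip_card hnF hF1]


theorem factor (d : ℕ) (E : Finset (Fin n × Fin n))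
    (hcut : ∀ S T : Finset (Fin n),
      (d : ℤ) * ((S.card : ℤ) + (T.card : ℤ) - (n : ℤ)) ≤ (cnt E S T : ℤ)) :
    ∃ F : Finset (Fin n × Fin n), F ⊆ E ∧ (∀ x, outF F x = d) ∧ (∀ y, inF F y = d) := by
  classical
  set P := E.powerset.filter
    (fun F => (∀ z, outF F z ≤ d) ∧ (∀ z, inF F z ≤ d)) with hP
  have hPne : P.Nonempty := by
    refine ⟨∅, ?_⟩
    rw [hP, Finset.mem_filter]
    refine ⟨Finset.empty_mem_powerset _, fun z => ?_, fun z => ?_⟩ <;> simp [outF, inF]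
  obtain ⟨F, hFP, hmax⟩ := P.exists_max_image Finset.card hPne
  rw [hP, Finset.mem_filter, Finset.mem_powerset] at hFP
  obtain ⟨hFE, hout, hin⟩ := hFP
  have hsumout : ∑ x, outF F x = F.card := by rw [sum_outF, card_eq_cnt]
  have hsumin : ∑ y, inF F y = F.card := by rw [sum_inF, card_eq_cnt]
  have hcard : F.card = d * n := by
    by_contra hne
    have hlt : F.card < d * n := by
      rcases lt_or_gt_of_ne hne with h | h
      · exact h
      · exfalso
        have : ∑ x, outF F x ≤ ∑ _x : Fin n, d :=
          Finset.sum_le_sum (fun x _ => hout x)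
        simp only [Finset.sum_const, Finset.card_univ, Fintype.card_fin, smul_eq_mul] at this
        have hmc : n * d = d * n := Nat.mul_comm n d
        omega
    -- there is a vertex of small out-degree
    have hx₀ : ∃ x₀, outF F x₀ < d := by
      by_contra hc
      push_neg at hc
      have : ∑ _x : Fin n, d ≤ ∑ x, outF F x := Finset.sum_le_sum (fun x _ => hc x)
      simp only [Finset.sum_const, Finset.card_univ, Fintype.card_fin, smul_eq_mul] at this
      have hmc : n * d = d * n := Nat.mul_comm n d
      omega
    obtain ⟨x₀, hx₀⟩ := hx₀
    set R := univ.filter (fun x : Fin n => ∃ l, WalkOK d E F x l) with hR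
    have hx₀R : x₀ ∈ R := by
      rw [hR, mem_filter]
      exact ⟨mem_univ _, [], hx₀⟩
    set Q := univ.filter
      (fun y : Fin n => ∃ x ∈ R, (x, y) ∈ E ∧ (x, y) ∉ F) with hQ
    have noaug : ∀ y ∈ Q, inF F y = d := by
      intro y hy
      rw [hQ, mem_filter] at hy
      obtain ⟨-, x, hxR, hxyE, hxyF⟩ := hy
      by_contra hne'
      have hylt : inF F y < d := lt_of_le_of_ne (hin y) hne'
      rw [hR, mem_filter] at hxR
      obtain ⟨-, l, hl⟩ := hxR
      obtain ⟨F', h1, h2, h3, h4⟩ :=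
        aug d E l.length l le_rfl F x y hFE hout hin hl hxyE hxyF hylt
      have : F' ∈ P := by
        rw [hP, Finset.mem_filter, Finset.mem_powerset]
        exact ⟨h1, h2, h3⟩
      have := hmax F' this
      omega
    -- F-edges into Q come from R
    have tailsR : ∀ p ∈ F, p.2 ∈ Q → p.1 ∈ R := by
      rintro ⟨x', y⟩ hpF hpQ
      rw [hQ, mem_filter] at hpQ
      obtain ⟨-, x, hxR, hxyE, hxyF⟩ := hpQ
      rw [hR, mem_filter] at hxR ⊢
      obtain ⟨-, l, hl⟩ := hxR
      exact ⟨mem_univ _, (y, x) :: l, hxyE, hxyF, hpF, hl⟩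
    have hcntQ : cnt F univ Q = d * Q.card := by
      rw [← sum_inF]
      rw [Finset.sum_congr rfl noaug]
      simp [mul_comm]
    have hcntRQ : cnt F R Q = cnt F univ Q := by
      unfold cnt
      congr 1
      apply filter_congr
      intro p hp
      simp only [mem_univ, true_and, eq_iff_iff]
      exact ⟨fun h => h.2, fun hpQ => ⟨tailsR p hp hpQ, hpQ⟩⟩
    have hsumR : cnt F R univ < d * R.card := by
      rw [← sum_outF]
      calc ∑ x ∈ R, outF F x < ∑ _x ∈ R, d := by
            apply Finset.sum_lt_sum (fun x _ => hout x) ⟨x₀, hx₀R, hx₀⟩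
        _ = d * R.card := by simp [mul_comm]
    have hEQ : cnt E R (univ \ Q) = cnt F R (univ \ Q) := by
      unfold cnt
      congr 1
      ext p
      simp only [mem_filter, mem_sdiff, mem_univ, true_and]
      constructor
      · rintro ⟨hpE, hpR, hpQ⟩
        refine ⟨?_, hpR, hpQ⟩
        by_contra hpF
        apply hpQ
        rw [hQ, mem_filter]
        exact ⟨mem_univ _, p.1, hpR, by simpa using hpE, by simpa using hpF⟩
      · rintro ⟨hpF, hpR, hpQ⟩
        exact ⟨hFE hpF, hpR, hpQ⟩
    have hsplit : cnt F R univ = cnt F R Q + cnt F R (univ \ Q) := cnt_split F R Q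
    have hQcard : (univ \ Q).card = n - Q.card := by
      rw [Finset.card_sdiff_of_subset (Finset.subset_univ _)]
      simp
    have hQle : Q.card ≤ n := by
      simpa using Finset.card_le_card (Finset.subset_univ Q)
    have hcut' := hcut R (univ \ Q)
    rw [hQcard] at hcut'
    -- contradiction
    have h1 : cnt F R (univ \ Q) + d * Q.card < d * R.card := by omega
    have h2 : (d : ℤ) * ((R.card : ℤ) - (Q.card : ℤ)) ≤ (cnt F R (univ \ Q) : ℤ) := by
      rw [← hEQ]
      calc (d : ℤ) * ((R.card : ℤ) - (Q.card : ℤ))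
          = (d : ℤ) * ((R.card : ℤ) + ((n : ℤ) - (Q.card : ℤ)) - (n : ℤ)) := by ring
        _ = (d : ℤ) * ((R.card : ℤ) + ((n - Q.card : ℕ) : ℤ) - (n : ℤ)) := by
            rw [Nat.cast_sub hQle]
        _ ≤ _ := hcut' 
    have h3 : (cnt F R (univ \ Q) : ℤ) + (d : ℤ) * (Q.card : ℤ) < (d : ℤ) * (R.card : ℤ) := by
      exact_mod_cast h1
    nlinarith [h2, h3]
  refine ⟨F, hFE, ?_, ?_⟩
  · have : ∑ x, outF F x = ∑ _x : Fin n, d := by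
      simp only [Finset.sum_const, Finset.card_univ, Fintype.card_fin, smul_eq_mul]
      have hmc : n * d = d * n := Nat.mul_comm n d
      omega
    intro x
    exact (Finset.sum_eq_sum_iff_of_le (fun i _ => hout i)).1 this x (mem_univ x)
  · have : ∑ y, inF F y = ∑ _y : Fin n, d := by
      simp only [Finset.sum_const, Finset.card_univ, Fintype.card_fin, smul_eq_mul]
      have hmc : n * d = d * n := Nat.mul_comm n d
      omega
    intro y
    exact (Finset.sum_eq_sum_iff_of_le (fun i _ => hin i)).1 this y (mem_univ y)


lemma cnt_split_left (G : Finset (Fin n × Fin n)) (S T : Finset (Fin n)) :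
    cnt G univ T = cnt G S T + cnt G (univ \ S) T := by
  unfold cnt
  rw [← Finset.card_union_of_disjoint, ← Finset.filter_or]
  · apply Finset.card_nbij' (i := id) (j := id) <;> intro p hp <;>
      simp only [Finset.mem_coe, mem_filter, mem_univ, mem_sdiff, true_and, id] at hp ⊢ <;> tauto
  · rw [Finset.disjoint_filter]
    intro p _ hp hp2
    exact (mem_sdiff.1 hp2.1).2 hp.1

lemma cnt_mono_set (G : Finset (Fin n × Fin n)) {S S' : Finset (Fin n)} (h : S ⊆ S')
    (T : Finset (Fin n)) : cnt G S T ≤ cnt G S' T :=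
  Finset.card_le_card (fun p hp => by
    simp only [mem_filter] at hp ⊢
    exact ⟨hp.1, h hp.2.1, hp.2.2⟩)

lemma pow23_le {c : ℝ} (hc : 0 < c) :
    ∃ N : ℕ, 1 ≤ N ∧ ∀ n : ℕ, N ≤ n → ((n : ℝ)) ^ ((2 : ℝ) / 3) ≤ c * n := by
  refine ⟨⌈(1 / c) ^ (3 : ℕ)⌉₊ + 1, by omega, ?_⟩
  intro n hn
  have hn1 : 1 ≤ n := by omega
  have hnpos : (0 : ℝ) < n := by exact_mod_cast hn1
  have h1 : ((1 / c) ^ (3 : ℕ) : ℝ) ≤ (n : ℝ) := by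
    calc ((1 / c) ^ (3 : ℕ) : ℝ) ≤ (⌈(1 / c) ^ (3 : ℕ)⌉₊ : ℝ) := Nat.le_ceil _
      _ ≤ (n : ℝ) := by exact_mod_cast Nat.le_of_succ_le hn
  have key : 1 / c ≤ (n : ℝ) ^ ((1 : ℝ) / 3) := by
    have h2 : (((1 / c : ℝ) ^ (3 : ℕ)) ^ ((1 : ℝ) / 3)) ≤ (n : ℝ) ^ ((1 : ℝ) / 3) :=
      Real.rpow_le_rpow (by positivity) h1 (by norm_num)
    calc (1 / c : ℝ) = ((1 / c : ℝ) ^ ((3 : ℝ))) ^ ((1 : ℝ) / 3) := by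
          rw [← Real.rpow_mul (by positivity)]
          norm_num
      _ = (((1 / c : ℝ) ^ (3 : ℕ)) : ℝ) ^ ((1 : ℝ) / 3) := by
          rw [show ((3 : ℝ)) = ((3 : ℕ) : ℝ) by norm_num, Real.rpow_natCast]
      _ ≤ _ := h2
  have hsplit : (n : ℝ) ^ ((2 : ℝ) / 3) * (n : ℝ) ^ ((1 : ℝ) / 3) = (n : ℝ) := by
    rw [← Real.rpow_add hnpos]
    norm_num
  have hb : (0 : ℝ) < (n : ℝ) ^ ((2 : ℝ) / 3) := Real.rpow_pos_of_pos hnpos _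
  have h3 : 1 ≤ c * (n : ℝ) ^ ((1 : ℝ) / 3) := by
    rw [div_le_iff₀ hc] at key
    · linarith [key]
  calc (n : ℝ) ^ ((2 : ℝ) / 3) = (n : ℝ) ^ ((2 : ℝ) / 3) * 1 := by ring
    _ ≤ (n : ℝ) ^ ((2 : ℝ) / 3) * (c * (n : ℝ) ^ ((1 : ℝ) / 3)) := by
          have := mul_le_mul_of_nonneg_left h3 hb.le
          linarith only [this]
    _ = c * ((n : ℝ) ^ ((2 : ℝ) / 3) * (n : ℝ) ^ ((1 : ℝ) / 3)) := by ring
    _ = c * n := by rw [hsplit]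

end RSS

set_option maxHeartbeats 1000000 in
open Finset in
/-- digraph form of Lemma 1.4. Let `ε₀, γ₀ > 0`, `c₀ ≥ ε₀`,
`d = ⌈(c₀ - ε₀) n / 2⌉`, and `n` sufficiently large. If `D` is a digraph on `n`
vertices with all in- and out-degrees between `c₀ n / 2 - n^(2/3)` and
`c₀ n / 2 + n^(2/3)`, with at least `γ₀ n² / 3` edges in each direction between any
two sets `A, B` with `|A| ≥ c₀ n / 3` and `|B| ≥ n / 2`, then `D` contains a spanning
`d`-regular subdigraph. -/
theorem regular_spanning_subdigraph (ε₀ γ₀ c₀ : ℝ) (hε₀ : 0 < ε₀) (hγ₀ : 0 < γ₀)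
    (hc₀ : ε₀ ≤ c₀) :
    ∃ n₀ : ℕ, ∀ n : ℕ, n₀ ≤ n → ∀ D : Digraph (Fin n),
      (∀ v : Fin n,
        c₀ * (n : ℝ) / 2 - (n : ℝ) ^ ((2 : ℝ) / 3) ≤ (inDeg D v : ℝ) ∧
        (inDeg D v : ℝ) ≤ c₀ * (n : ℝ) / 2 + (n : ℝ) ^ ((2 : ℝ) / 3) ∧
        c₀ * (n : ℝ) / 2 - (n : ℝ) ^ ((2 : ℝ) / 3) ≤ (outDeg D v : ℝ) ∧
        (outDeg D v : ℝ) ≤ c₀ * (n : ℝ) / 2 + (n : ℝ) ^ ((2 : ℝ) / 3)) →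
      (∀ A B : Set (Fin n), c₀ * (n : ℝ) / 3 ≤ (A.ncard : ℝ) →
        (n : ℝ) / 2 ≤ (B.ncard : ℝ) →
        γ₀ * (n : ℝ) ^ 2 / 3 ≤ (dEdges D A B : ℝ) ∧
        γ₀ * (n : ℝ) ^ 2 / 3 ≤ (dEdges D B A : ℝ)) →
      ∃ D' : Digraph (Fin n), (∀ u v : Fin n, D'.Adj u v → D.Adj u v) ∧
        ∀ v : Fin n, inDeg D' v = ⌈(c₀ - ε₀) * (n : ℝ) / 2⌉₊ ∧
          outDeg D' v = ⌈(c₀ - ε₀) * (n : ℝ) / 2⌉₊ := by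
  classical
  have hc₀pos : 0 < c₀ := lt_of_lt_of_le hε₀ hc₀
  have hApos : (0 : ℝ) < (c₀ - ε₀) / 2 + 1 := by linarith
  set c1 : ℝ := min (ε₀ / 8) (γ₀ * ε₀ / (24 * ((c₀ - ε₀) / 2 + 1))) with hc1def
  have hc1pos : 0 < c1 := by
    rw [hc1def]
    exact lt_min (by positivity) (div_pos (mul_pos hγ₀ hε₀) (by linarith))
  obtain ⟨N₁, hN₁1, hN₁⟩ := RSS.pow23_le hc1pos
  refine ⟨max N₁ (⌈8 / ε₀⌉₊ + 1), ?_⟩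
  intro n hn D hdeg hexp
  set N : ℝ := (n : ℝ) with hNdef
  have hnN₁ : N₁ ≤ n := le_trans (le_max_left _ _) hn
  have hn8 : ⌈8 / ε₀⌉₊ + 1 ≤ n := le_trans (le_max_right _ _) hn
  have hn1 : 1 ≤ n := le_trans hN₁1 hnN₁
  have hN1 : (1 : ℝ) ≤ N := by rw [hNdef]; exact_mod_cast hn1
  have hNpos : (0 : ℝ) < N := by linarith
  set β : ℝ := N ^ ((2 : ℝ) / 3) with hβdef
  have hβ0 : 0 ≤ β := by rw [hβdef]; positivity
  have hβc1 : β ≤ c1 * N := hN₁ n hnN₁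
  have hc1a : c1 ≤ ε₀ / 8 := min_le_left _ _
  have hc1b : c1 ≤ γ₀ * ε₀ / (24 * ((c₀ - ε₀) / 2 + 1)) := min_le_right _ _
  have hβ8 : β ≤ ε₀ * N / 8 := by
    calc β ≤ c1 * N := hβc1
      _ ≤ (ε₀ / 8) * N := mul_le_mul_of_nonneg_right hc1a hNpos.le
      _ = ε₀ * N / 8 := by ring
  have hone : 1 ≤ ε₀ * N / 8 := by
    have h8 : 8 / ε₀ ≤ N := by
      calc (8 / ε₀ : ℝ) ≤ (⌈8 / ε₀⌉₊ : ℝ) := Nat.le_ceil _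
        _ ≤ N := by rw [hNdef]; exact_mod_cast Nat.le_of_succ_le hn8
    rw [div_le_iff₀ hε₀] at h8
    linarith only [h8]
  set d : ℕ := ⌈(c₀ - ε₀) * N / 2⌉₊ with hddef
  set dR : ℝ := (d : ℝ) with hdRdef
  have hdlow : (c₀ - ε₀) * N / 2 ≤ dR := Nat.le_ceil _
  have harg0 : (0 : ℝ) ≤ (c₀ - ε₀) * N / 2 := by
    have : (0 : ℝ) ≤ (c₀ - ε₀) * N := mul_nonneg (by linarith) hNpos.le
    linarith
  have hdhigh : dR ≤ (c₀ - ε₀) * N / 2 + 1 := by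
    have := Nat.ceil_lt_add_one harg0
    rw [hdRdef, hddef]
    exact this.le
  set δ : ℝ := c₀ * N / 2 - β with hδdef
  set Δ : ℝ := c₀ * N / 2 + β with hΔdef
  have hΔδ : Δ = δ + 2 * β := by rw [hΔdef, hδdef]; ring
  clear_value c1 N β d dR δ Δ
  have hδd : dR + ε₀ * N / 4 ≤ δ := by rw [hδdef]; linarith
  have hεcN : ε₀ * N ≤ c₀ * N := mul_le_mul_of_nonneg_right hc₀ hNpos.le
  have hδc3 : c₀ * N / 3 ≤ δ := by rw [hδdef]; linarith
  have hδ0 : (0 : ℝ) ≤ δ := by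
    have : (0 : ℝ) ≤ c₀ * N / 3 := by positivity
    linarith
  have hd0 : (0 : ℝ) ≤ dR := by rw [hdRdef]; positivity
  have hεN40 : (0 : ℝ) ≤ ε₀ * N / 4 :=
    div_nonneg (mul_nonneg hε₀.le hNpos.le) (by norm_num)
  have hdδ : dR ≤ δ := by linarith
  set E : Finset (Fin n × Fin n) := univ.filter (fun p => D.Adj p.1 p.2) with hE
  clear_value E
  -- conversions between set cardinalities and finset counts
  have houtE : ∀ v, outDeg D v = RSS.outF E v := by
    intro v
    unfold outDeg RSS.outF
    rw [show {w | D.Adj v w} = ↑(univ.filter fun w => (v, w) ∈ E) by ext w; simp [hE]]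
    rw [Set.ncard_coe_finset]
  have hinE : ∀ v, inDeg D v = RSS.inF E v := by
    intro v
    unfold inDeg RSS.inF
    rw [show {w | D.Adj w v} = ↑(univ.filter fun w => (w, v) ∈ E) by ext w; simp [hE]]
    rw [Set.ncard_coe_finset]
  have hdE : ∀ S T : Finset (Fin n), dEdges D ↑S ↑T = RSS.cnt E S T := by
    intro S T
    unfold dEdges RSS.cnt
    rw [show {p : Fin n × Fin n | D.Adj p.1 p.2 ∧ p.1 ∈ (↑S : Set (Fin n)) ∧
        p.2 ∈ (↑T : Set (Fin n))} = ↑(E.filter fun p => p.1 ∈ S ∧ p.2 ∈ T) by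
      ext p; simp [hE]]
    rw [Set.ncard_coe_finset]
  have hdegout : ∀ v, δ ≤ (RSS.outF E v : ℝ) ∧ (RSS.outF E v : ℝ) ≤ Δ := by
    intro v
    have h := hdeg v
    rw [houtE v] at h
    exact ⟨h.2.2.1, h.2.2.2⟩
  have hdegin : ∀ v, δ ≤ (RSS.inF E v : ℝ) ∧ (RSS.inF E v : ℝ) ≤ Δ := by
    intro v
    have h := hdeg v
    rw [hinE v] at h
    exact ⟨h.1, h.2.1⟩
  -- the cut condition
  have hcut : ∀ S T : Finset (Fin n),
      (d : ℤ) * ((S.card : ℤ) + (T.card : ℤ) - (n : ℤ)) ≤ (RSS.cnt E S T : ℤ) := by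
    intro S T
    have hsn : S.card ≤ n := by
      have := Finset.card_le_univ S
      simpa using this
    have htn : T.card ≤ n := by
      have := Finset.card_le_univ T
      simpa using this
    suffices h : dR * ((S.card : ℝ) + (T.card : ℝ) - N) ≤ (RSS.cnt E S T : ℝ) by
      rw [hdRdef, hNdef] at h
      exact_mod_cast h
    set s : ℝ := (S.card : ℝ) with hsdef
    set t : ℝ := (T.card : ℝ) with htdef
    set cR : ℝ := (RSS.cnt E S T : ℝ) with hcRdef
    clear_value s t cR
    have hs0 : 0 ≤ s := by rw [hsdef]; positivity
    have ht0 : 0 ≤ t := by rw [htdef]; positivity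
    have hsN : s ≤ N := by rw [hsdef, hNdef]; exact_mod_cast hsn
    have htN : t ≤ N := by rw [htdef, hNdef]; exact_mod_cast htn
    have hcR0 : 0 ≤ cR := by rw [hcRdef]; positivity
    by_cases hk : s + t - N ≤ 0
    · have : dR * (s + t - N) ≤ 0 := mul_nonpos_of_nonneg_of_nonpos hd0 hk
      linarith
    push_neg at hk
    -- edge-count lower bounds
    have hTc : ((univ \ T).card : ℝ) = N - t := by
      rw [Finset.card_sdiff_of_subset (Finset.subset_univ _)]
      rw [htdef, hNdef]
      simp only [Finset.card_univ, Fintype.card_fin]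
      exact Nat.cast_sub htn
    have hSc : ((univ \ S).card : ℝ) = N - s := by
      rw [Finset.card_sdiff_of_subset (Finset.subset_univ _)]
      rw [hsdef, hNdef]
      simp only [Finset.card_univ, Fintype.card_fin]
      exact Nat.cast_sub hsn
    have hsumS : s * δ ≤ (RSS.cnt E S univ : ℝ) := by
      have h1 : S.card • δ ≤ ∑ x ∈ S, (RSS.outF E x : ℝ) :=
        Finset.card_nsmul_le_sum S _ δ (fun x _ => (hdegout x).1)
      have h2 : (∑ x ∈ S, (RSS.outF E x : ℝ)) = ((RSS.cnt E S univ : ℕ) : ℝ) := by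
        rw [← RSS.sum_outF]
        push_cast
        rfl
      rw [h2] at h1
      rw [hsdef]
      simpa [nsmul_eq_mul] using h1
    have hsumT : t * δ ≤ (RSS.cnt E univ T : ℝ) := by
      have h1 : T.card • δ ≤ ∑ y ∈ T, (RSS.inF E y : ℝ) :=
        Finset.card_nsmul_le_sum T _ δ (fun y _ => (hdegin y).1)
      have h2 : (∑ y ∈ T, (RSS.inF E y : ℝ)) = ((RSS.cnt E univ T : ℕ) : ℝ) := by
        rw [← RSS.sum_inF]
        push_cast
        rfl
      rw [h2] at h1
      rw [htdef]
      simpa [nsmul_eq_mul] using h1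
    have hsumTc : (RSS.cnt E univ (univ \ T) : ℝ) ≤ (N - t) * Δ := by
      have h1 : ∑ y ∈ univ \ T, (RSS.inF E y : ℝ) ≤ (univ \ T).card • Δ :=
        Finset.sum_le_card_nsmul _ _ Δ (fun y _ => (hdegin y).2)
      have h2 : (∑ y ∈ univ \ T, (RSS.inF E y : ℝ)) = ((RSS.cnt E univ (univ \ T) : ℕ) : ℝ) := by
        rw [← RSS.sum_inF]
        push_cast
        rfl
      rw [h2, nsmul_eq_mul, hTc] at h1
      exact h1
    have hsplitT : (RSS.cnt E S univ : ℝ) =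
        (RSS.cnt E S T : ℝ) + (RSS.cnt E S (univ \ T) : ℝ) := by
      have := RSS.cnt_split E S T
      exact_mod_cast this
    have hsplitS : (RSS.cnt E univ T : ℝ) =
        (RSS.cnt E S T : ℝ) + (RSS.cnt E (univ \ S) T : ℝ) := by
      have := RSS.cnt_split_left E S T
      exact_mod_cast this
    have hStc : (RSS.cnt E S (univ \ T) : ℝ) ≤ s * (N - t) := by
      have h1 := RSS.cnt_le_mul E S (univ \ T)
      have h2 : ((RSS.cnt E S (univ \ T) : ℕ) : ℝ) ≤ ((S.card * (univ \ T).card : ℕ) : ℝ) := by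
        exact_mod_cast h1
      rw [Nat.cast_mul, hTc, ← hsdef] at h2
      exact h2
    have hScT : (RSS.cnt E (univ \ S) T : ℝ) ≤ (N - s) * t := by
      have h1 := RSS.cnt_le_mul E (univ \ S) T
      have h2 : ((RSS.cnt E (univ \ S) T : ℕ) : ℝ) ≤
          (((univ \ S).card * T.card : ℕ) : ℝ) := by exact_mod_cast h1
      rw [Nat.cast_mul, hSc, ← htdef] at h2
      exact h2
    have hStcU : (RSS.cnt E S (univ \ T) : ℝ) ≤ (RSS.cnt E univ (univ \ T) : ℝ) := by
      exact_mod_cast RSS.cnt_mono_set E (Finset.subset_univ S) (univ \ T)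
    -- B1 : s * δ ≤ cR + s * (N - t)
    have B1 : s * δ ≤ cR + s * (N - t) := by
      rw [hcRdef]
      linarith [hsumS, hsplitT, hStc]
    have B2 : t * δ ≤ cR + (N - s) * t := by
      rw [hcRdef]
      linarith [hsumT, hsplitS, hScT]
    have B3 : s * δ ≤ cR + (N - t) * Δ := by
      rw [hcRdef]
      linarith [hsumS, hsplitT, hStcU, hsumTc]
    by_cases h1 : s ≤ c₀ * N / 3
    · -- small S side: degree bound suffices
      have hks : s + t - N ≤ s := by linarith
      have hsδ : s ≤ δ := le_trans h1 hδc3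
      have key : dR * (s + t - N) ≤ s * (δ + (s + t - N) - s) := by
        by_cases hsd : dR ≤ s
        · have e1 : 0 ≤ s * (δ - s) := mul_nonneg hs0 (by linarith)
          have e2 : 0 ≤ (s + t - N) * (s - dR) := mul_nonneg hk.le (by linarith)
          linarith only [e1, e2]
        · push_neg at hsd
          have e2' : s * (s - dR) ≤ (s + t - N) * (s - dR) :=
            mul_le_mul_of_nonpos_right hks (by linarith)
          have e3 : 0 ≤ s * (δ - dR) := mul_nonneg hs0 (by linarith)
          linarith only [e2', e3]
      linarith only [B1, key]
    · by_cases h2 : t ≤ c₀ * N / 3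
      · have hkt : s + t - N ≤ t := by linarith
        have htδ : t ≤ δ := le_trans h2 hδc3
        have key : dR * (s + t - N) ≤ t * (δ + (s + t - N) - t) := by
          by_cases htd : dR ≤ t
          · have e1 : 0 ≤ t * (δ - t) := mul_nonneg ht0 (by linarith)
            have e2 : 0 ≤ (s + t - N) * (t - dR) := mul_nonneg hk.le (by linarith)
            linarith only [e1, e2]
          · push_neg at htd
            have e2' : t * (t - dR) ≤ (s + t - N) * (t - dR) :=
              mul_le_mul_of_nonpos_right hkt (by linarith)
            have e3 : 0 ≤ t * (δ - dR) := mul_nonneg ht0 (by linarith)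
            linarith only [e2', e3]
        linarith only [B2, key]
      · push_neg at h1 h2
        by_cases hkK : s + t - N ≤ 8 * β / ε₀
        · -- use the expansion hypothesis
          have hγ : γ₀ * N ^ 2 / 3 ≤ cR := by
            by_cases htN2 : N / 2 ≤ t
            · have h := (hexp ↑S ↑T (by rw [Set.ncard_coe_finset, ← hsdef]; exact h1.le)
                (by rw [Set.ncard_coe_finset, ← htdef]; exact htN2)).1
              rw [hdE] at h
              rw [hcRdef]
              exact_mod_cast h
            · push_neg at htN2
              have hsN2 : N / 2 ≤ s := by linarith
              have h := (hexp ↑T ↑S (by rw [Set.ncard_coe_finset, ← htdef]; exact h2.le)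
                (by rw [Set.ncard_coe_finset, ← hsdef]; exact hsN2)).2
              rw [hdE] at h
              rw [hcRdef]
              exact_mod_cast h
          have hL3 : dR * (8 * β / ε₀) ≤ γ₀ * N ^ 2 / 3 := by
            have hdN : dR ≤ ((c₀ - ε₀) / 2 + 1) * N := by linarith only [hdhigh, hN1]
            have hdiv : 8 * β / ε₀ ≤ 8 * (c1 * N) / ε₀ :=
              (div_le_div_iff_of_pos_right hε₀).mpr (by linarith)
            have h5 : dR * (8 * β / ε₀) ≤ (((c₀ - ε₀) / 2 + 1) * N) * (8 * (c1 * N) / ε₀) :=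
              mul_le_mul hdN hdiv (div_nonneg (by linarith) hε₀.le)
                (mul_nonneg (by linarith) (by linarith))
            have h6 : (((c₀ - ε₀) / 2 + 1) * N) * (8 * (c1 * N) / ε₀) ≤ γ₀ * N ^ 2 / 3 := by
              have hc1b' : 8 * ((c₀ - ε₀) / 2 + 1) * c1 / ε₀ ≤ γ₀ / 3 := by
                have h24 : (0 : ℝ) < 24 * ((c₀ - ε₀) / 2 + 1) := by linarith
                have hb := (le_div_iff₀ h24).mp hc1b
                rw [div_le_div_iff₀ hε₀ (by norm_num : (0:ℝ) < 3)]
                linarith only [hb]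
              have heq : (((c₀ - ε₀) / 2 + 1) * N) * (8 * (c1 * N) / ε₀) =
                  (8 * ((c₀ - ε₀) / 2 + 1) * c1 / ε₀) * N ^ 2 := by
                field_simp
              rw [heq]
              have hmul := mul_le_mul_of_nonneg_right hc1b' (sq_nonneg N)
              linarith only [hmul]
            linarith
          have : dR * (s + t - N) ≤ dR * (8 * β / ε₀) :=
            mul_le_mul_of_nonneg_left hkK hd0
          linarith
        · -- large deficiency: degree bounds with upper bound Δ
          push_neg at hkK
          have h7 : (8 * β / ε₀) * (ε₀ * N / 4) ≤ (s + t - N) * (δ - dR) :=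
            mul_le_mul hkK.le (by linarith) (by linarith [hεN40]) (by linarith)
          have h8 : (8 * β / ε₀) * (ε₀ * N / 4) = 2 * β * N := by
            field_simp
            ring
          have h7' : 2 * β * N ≤ (s + t - N) * (δ - dR) := by rw [← h8]; exact h7
          have h9 : (N - t) * (2 * β) ≤ N * (2 * β) :=
            mul_le_mul_of_nonneg_right (by linarith) (by linarith)
          have e1 : (N - t) * Δ = (N - t) * δ + (N - t) * (2 * β) := by rw [hΔδ]; ring
          have e3 : s * δ - (N - t) * δ = (s + t - N) * δ := by ring
          have e4 : (s + t - N) * δ - (s + t - N) * (δ - dR) = (s + t - N) * dR := by ring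
          linarith only [B3, e1, e3, e4, h9, h7']
  -- apply the factor theorem
  obtain ⟨F, hFE, hFout, hFin⟩ := RSS.factor d E hcut
  refine ⟨⟨fun u v => (u, v) ∈ F⟩, ?_, ?_⟩
  · intro u v huv
    have := hFE huv
    rw [hE] at this
    simpa using this
  · intro v
    constructor
    · show ({w | (w, v) ∈ F} : Set (Fin n)).ncard = d
      rw [show {w | (w, v) ∈ F} = ↑(univ.filter fun w => (w, v) ∈ F) by ext w; simp]
      rw [Set.ncard_coe_finset]
      exact hFin v
    · show ({w | (v, w) ∈ F} : Set (Fin n)).ncard = d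
      rw [show {w | (v, w) ∈ F} = ↑(univ.filter fun w => (v, w) ∈ F) by ext w; simp]
      rw [Set.ncard_coe_finset]
      exact hFout v
end
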